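/- arXiv:2004.01741 — 6 statements merged into one kernel-verified Lean document; each statement's English description precedes it below -/
import Mathlib

section
/- For every symmetric Boolean function f on n variables, the nearest neighbor complexity satisfies NN(f) ≤ n + 1. -/
open Finset

noncomputable section

noncomputable instance {n : ℕ} : DecidableEq (EuclideanSpace ℝ (Fin n)) :=
  fun _ _ => Classical.propDecidable _

/-- The embedding of a Boolean value into `ℝ`. -/
def boolToR (b : Bool) : ℝ := if b then 1 else 0

/-- The embedding of a Boolean vector into Euclidean space `ℝ^n`. -/
def toPoint {n : ℕ} (a : Fin n → Bool) : EuclideanSpace ℝ (Fin n) :=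
  WithLp.toLp 2 (fun i => boolToR (a i))

/-- `(P, N)` is a nearest neighbor representation of the Boolean function `f`:
`P` and `N` are disjoint finite sets of points of `ℝ^n` such that for every Boolean
vector `a`, if `f a = 1` then some `b ∈ P` is strictly closer to `a` than every `c ∈ N`,
and if `f a = 0` then some `b ∈ N` is strictly closer to `a` than every `c ∈ P`. -/
def IsNNRep {n : ℕ} (f : (Fin n → Bool) → Bool)
    (P N : Finset (EuclideanSpace ℝ (Fin n))) : Prop :=
  Disjoint P N ∧
  ∀ a : Fin n → Bool,
    (f a = true → ∃ b ∈ P, ∀ c ∈ N, dist (toPoint a) b < dist (toPoint a) c) ∧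
    (f a = false → ∃ b ∈ N, ∀ c ∈ P, dist (toPoint a) b < dist (toPoint a) c)

/-- The nearest neighbor complexity of `f`: the minimum size `|P ∪ N|` of a nearest
neighbor representation `(P, N)` of `f`. -/
def NN {n : ℕ} (f : (Fin n → Bool) → Bool) : ℕ :=
  sInf {m | ∃ P N, IsNNRep f P N ∧ (P ∪ N).card = m}

/-- A point of `ℝ^n` is Boolean if all of its coordinates are `0` or `1`. -/
def IsBooleanPoint {n : ℕ} (p : EuclideanSpace ℝ (Fin n)) : Prop :=
  ∀ i, p i = 0 ∨ p i = 1

/-- The Boolean nearest neighbor complexity of `f`: the minimum size `|P ∪ N|` of a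
nearest neighbor representation of `f` all of whose prototypes are Boolean points. -/
def BNN {n : ℕ} (f : (Fin n → Bool) → Bool) : ℕ :=
  sInf {m | ∃ P N, IsNNRep f P N ∧ (∀ p ∈ P ∪ N, IsBooleanPoint p) ∧ (P ∪ N).card = m}

/-- The weight (number of `1` components) of a Boolean vector. -/
def wt {n : ℕ} (x : Fin n → Bool) : ℕ := (Finset.univ.filter fun i => x i = true).card


/-- The diagonal prototype point with all coordinates `k / n`. -/
def qpt (n k : ℕ) : EuclideanSpace ℝ (Fin n) := WithLp.toLp 2 (fun _ => (k : ℝ) / n)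

lemma wt_le {n : ℕ} (a : Fin n → Bool) : wt a ≤ n := by
  have := Finset.card_filter_le Finset.univ (fun i => a i = true)
  simpa [wt] using this

lemma sumsq {n : ℕ} (a : Fin n → Bool) (t : ℝ) :
    ∑ i, (boolToR (a i) - t) ^ 2
      = (wt a : ℝ) * (1 - t) ^ 2 + ((n : ℝ) - wt a) * t ^ 2 := by
  classical
  rw [← Finset.sum_filter_add_sum_filter_not Finset.univ (fun i => a i = true)]
  have h1 : ∑ i ∈ Finset.univ.filter (fun i => a i = true), (boolToR (a i) - t) ^ 2
      = (wt a : ℝ) * (1 - t) ^ 2 := by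
    calc ∑ i ∈ Finset.univ.filter (fun i => a i = true), (boolToR (a i) - t) ^ 2
        = ∑ _i ∈ Finset.univ.filter (fun i : Fin n => a i = true), (1 - t) ^ 2 :=
          Finset.sum_congr rfl (fun i hi => by
            simp only [Finset.mem_filter] at hi
            simp [boolToR, hi.2])
      _ = (wt a : ℝ) * (1 - t) ^ 2 := by
          rw [Finset.sum_const, nsmul_eq_mul]; rfl
  have h2 : ∑ i ∈ Finset.univ.filter (fun i => ¬ a i = true), (boolToR (a i) - t) ^ 2
      = ((n : ℝ) - wt a) * t ^ 2 := by
    calc ∑ i ∈ Finset.univ.filter (fun i => ¬ a i = true), (boolToR (a i) - t) ^ 2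
        = ∑ _i ∈ Finset.univ.filter (fun i : Fin n => ¬ a i = true), t ^ 2 :=
          Finset.sum_congr rfl (fun i hi => by
            simp only [Finset.mem_filter] at hi
            have hfalse : a i = false := by simpa using hi.2
            simp [boolToR, hfalse])
      _ = ((Finset.univ.filter (fun i : Fin n => ¬ a i = true)).card : ℝ) * t ^ 2 := by
          rw [Finset.sum_const, nsmul_eq_mul]
      _ = ((n : ℝ) - wt a) * t ^ 2 := by
          congr 1
          have hcard : (Finset.univ.filter (fun i => ¬ a i = true)).card = n - wt a := by
            have := Finset.card_filter_add_card_filter_not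
              (s := (Finset.univ : Finset (Fin n))) (p := fun i => a i = true)
            simp only [Finset.card_univ, Fintype.card_fin] at this
            have hwt : (Finset.univ.filter (fun i => a i = true)).card = wt a := rfl
            omega
          rw [hcard, Nat.cast_sub (wt_le a)]
  rw [h1, h2]

lemma sum_dist_sq {n : ℕ} (a : Fin n → Bool) (k : ℕ) :
    ∑ i, dist (toPoint a i) ((qpt n k) i) ^ 2
      = ∑ i, (boolToR (a i) - (k : ℝ) / n) ^ 2 := by
  refine Finset.sum_congr rfl fun i _ => ?_
  rw [Real.dist_eq, sq_abs]
  rfl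

lemma dist_qpt_lt {n : ℕ} (a : Fin n → Bool) (j k : ℕ) (hn : 0 < n)
    (hk : k = wt a) (hjk : j ≠ k) :
    dist (toPoint a) (qpt n k) < dist (toPoint a) (qpt n j) := by
  rw [EuclideanSpace.dist_eq, EuclideanSpace.dist_eq]
  apply Real.sqrt_lt_sqrt (by positivity)
  rw [sum_dist_sq, sum_dist_sq, sumsq, sumsq, ← hk]
  have hnR : (0 : ℝ) < n := by exact_mod_cast hn
  have hjkR : (j : ℝ) ≠ (k : ℝ) := by exact_mod_cast hjk
  have hsq : (0 : ℝ) < ((j : ℝ) - k) ^ 2 :=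
    lt_of_le_of_ne (sq_nonneg _) (Ne.symm (pow_ne_zero 2 (sub_ne_zero.mpr hjkR)))
  have hne : (n : ℝ) ≠ 0 := ne_of_gt hnR
  field_simp
  nlinarith [mul_pos hnR hsq, hnR, mul_pos (mul_pos hnR hnR) (mul_pos hnR hsq)]

lemma qpt_inj {n : ℕ} (hn : 0 < n) {j k : ℕ} (_hj : j ≤ n) (_hk : k ≤ n)
    (h : qpt n j = qpt n k) : j = k := by
  have h0 : (j : ℝ) / n = (k : ℝ) / n := congrArg (fun p : EuclideanSpace ℝ (Fin n) => p ⟨0, hn⟩) h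
  have hnR : (0 : ℝ) < n := by exact_mod_cast hn
  field_simp [qpt, ne_of_gt hnR] at h0
  exact_mod_cast h0

lemma wt_rep {n : ℕ} (k : ℕ) (hk : k ≤ n) :
    wt (fun i : Fin n => decide (i.val < k)) = k := by
  classical
  unfold wt
  have : (Finset.univ.filter fun i : Fin n => (decide (i.val < k)) = true)
      = Finset.univ.filter fun i : Fin n => i.val < k := by
    ext i; simp
  rw [this]
  rw [Finset.card_filter]
  rw [Fin.sum_univ_eq_sum_range (fun i => if i < k then 1 else 0)]
  rw [← Finset.card_filter]
  have : (Finset.range n).filter (fun i => i < k) = Finset.range k := by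
    ext i; simp; omega
  rw [this, Finset.card_range]

/-- For every symmetric Boolean function `f` on `n` variables, the
nearest neighbor complexity satisfies `NN(f) ≤ n + 1`. -/
theorem NN_symmetric_le (n : ℕ) (f : (Fin n → Bool) → Bool)
    (hsym : ∀ x y : Fin n → Bool, wt x = wt y → f x = f y) :
    NN f ≤ n + 1 := by
  classical
  set g : ℕ → Bool := fun k => f (fun i : Fin n => decide (i.val < k)) with hg
  set P : Finset (EuclideanSpace ℝ (Fin n)) :=
    ((Finset.range (n + 1)).filter fun k => g k = true).image (qpt n) with hP
  set N : Finset (EuclideanSpace ℝ (Fin n)) :=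
    ((Finset.range (n + 1)).filter fun k => g k = false).image (qpt n) with hN
  have hfg : ∀ a : Fin n → Bool, f a = g (wt a) := fun a =>
    hsym a _ (by rw [wt_rep (wt a) (wt_le a)])
  -- disjointness
  have hdisj : Disjoint P N := by
    rw [Finset.disjoint_left]
    rintro x hxP hxN
    simp only [hP, hN, Finset.mem_image, Finset.mem_filter, Finset.mem_range] at hxP hxN
    obtain ⟨j, ⟨hj, hgj⟩, hje⟩ := hxP
    obtain ⟨k, ⟨hk, hgk⟩, hke⟩ := hxN
    have hjk : j = k := by
      rcases Nat.eq_zero_or_pos n with hn | hn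
      · omega
      · exact qpt_inj hn (by omega) (by omega) (hje.trans hke.symm)
    rw [hjk, hgk] at hgj
    exact absurd hgj (by simp)
  have hrep : IsNNRep f P N := by
    refine ⟨hdisj, fun a => ?_⟩
    have hwa : wt a ≤ n := wt_le a
    constructor
    · intro hfa
      refine ⟨qpt n (wt a), ?_, ?_⟩
      · simp only [hP, Finset.mem_image, Finset.mem_filter, Finset.mem_range]
        exact ⟨wt a, ⟨by omega, by rw [← hfg a]; exact hfa⟩, rfl⟩
      · intro c hc
        simp only [hN, Finset.mem_image, Finset.mem_filter, Finset.mem_range] at hc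
        obtain ⟨j, ⟨hj, hgj⟩, hje⟩ := hc
        have hjne : j ≠ wt a := by
          intro h; rw [h, ← hfg a, hfa] at hgj; simp at hgj
        have hn : 0 < n := by
          by_contra hn0
          have : n = 0 := by omega
          subst this
          omega
        rw [← hje]
        exact dist_qpt_lt a j (wt a) hn rfl hjne
    · intro hfa
      refine ⟨qpt n (wt a), ?_, ?_⟩
      · simp only [hN, Finset.mem_image, Finset.mem_filter, Finset.mem_range]
        exact ⟨wt a, ⟨by omega, by rw [← hfg a]; exact hfa⟩, rfl⟩
      · intro c hc
        simp only [hP, Finset.mem_image, Finset.mem_filter, Finset.mem_range] at hc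
        obtain ⟨j, ⟨hj, hgj⟩, hje⟩ := hc
        have hjne : j ≠ wt a := by
          intro h; rw [h, ← hfg a, hfa] at hgj; simp at hgj
        have hn : 0 < n := by
          by_contra hn0
          have : n = 0 := by omega
          subst this
          omega
        rw [← hje]
        exact dist_qpt_lt a j (wt a) hn rfl hjne
  have hcard : (P ∪ N).card ≤ n + 1 := by
    have hsub : P ∪ N ⊆ ((Finset.range (n + 1)).image (qpt n)) := by
      apply Finset.union_subset
      · exact Finset.image_subset_image (Finset.filter_subset _ _)
      · exact Finset.image_subset_image (Finset.filter_subset _ _)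
    calc (P ∪ N).card ≤ ((Finset.range (n + 1)).image (qpt n)).card :=
          Finset.card_le_card hsub
      _ ≤ (Finset.range (n + 1)).card := Finset.card_image_le
      _ = n + 1 := Finset.card_range _
  exact le_trans (Nat.sInf_le ⟨P, N, hrep, rfl⟩) hcard
end
end

section
/- The Boolean nearest neighbor complexity of the n-variable parity function x₁ ⊕ x₂ ⊕ … ⊕ xₙ equals 2^n; that is, every Boolean nearest neighbor representation of parity must take every point of {0,1}^n as a prototype. -/
open Finset

noncomputable section

/-- The parity function `x₁ ⊕ x₂ ⊕ ⋯ ⊕ xₙ`. -/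
def parity (n : ℕ) (x : Fin n → Bool) : Bool := decide (Odd (wt x))

open scoped Classical

lemma toPoint_inj {n : ℕ} : Function.Injective (toPoint (n := n)) := by
  intro a b h
  funext i
  have h2 : boolToR (a i) = boolToR (b i) := congrArg (fun p : EuclideanSpace ℝ (Fin n) => p i) h
  cases hai : a i <;> cases hbi : b i <;> simp [boolToR, hai, hbi] at h2 <;> rfl

lemma isBooleanPoint_toPoint {n : ℕ} (a : Fin n → Bool) : IsBooleanPoint (toPoint a) := by
  intro i; cases h : a i <;> simp [toPoint, boolToR, h]

/-- Hamming distance from a boolean vector to a point. -/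
noncomputable def hdist {n : ℕ} (a : Fin n → Bool) (p : EuclideanSpace ℝ (Fin n)) : ℕ :=
  (Finset.univ.filter fun i => toPoint a i ≠ p i).card

lemma dist_toPoint {n : ℕ} (a : Fin n → Bool) (p : EuclideanSpace ℝ (Fin n))
    (hp : IsBooleanPoint p) : dist (toPoint a) p = Real.sqrt (hdist a p) := by
  rw [EuclideanSpace.dist_eq]
  congr 1
  have hterm : ∀ i, dist (toPoint a i) (p i) ^ 2 = if toPoint a i ≠ p i then (1:ℝ) else 0 := by
    intro i
    rcases hp i with h | h <;> cases hai : a i <;>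
      simp [toPoint, boolToR, hai, h, Real.dist_eq]
  calc ∑ i, dist (toPoint a i) (p i) ^ 2
      = ∑ i, if toPoint a i ≠ p i then (1:ℝ) else 0 := by
        exact Finset.sum_congr rfl fun i _ => hterm i
    _ = ((Finset.univ.filter fun i => toPoint a i ≠ p i).card : ℝ) := by
        rw [Finset.sum_boole]
    _ = (hdist a p : ℝ) := rfl

lemma dist_lt_iff {n : ℕ} (a : Fin n → Bool) (p q : EuclideanSpace ℝ (Fin n))
    (hp : IsBooleanPoint p) (hq : IsBooleanPoint q) :
    dist (toPoint a) p < dist (toPoint a) q ↔ hdist a p < hdist a q := by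
  rw [dist_toPoint a p hp, dist_toPoint a q hq,
    Real.sqrt_lt_sqrt_iff (Nat.cast_nonneg _), Nat.cast_lt]

lemma toPoint_update {n : ℕ} (a : Fin n → Bool) (i j : Fin n) :
    toPoint (Function.update a i (!(a i))) j =
      if j = i then boolToR (!(a i)) else toPoint a j := by
  by_cases h : j = i <;> simp [toPoint, Function.update, h]

lemma flipped_eq {n : ℕ} (a : Fin n → Bool) (i : Fin n) (p : EuclideanSpace ℝ (Fin n))
    (hp : IsBooleanPoint p) (h : toPoint a i ≠ p i) :
    toPoint (Function.update a i (!(a i))) i = p i := by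
  rw [toPoint_update, if_pos rfl]
  rcases hp i with h' | h' <;> cases hai : a i <;>
    simp [toPoint, boolToR, hai, h'] at h ⊢

lemma hdist_update_of_ne {n : ℕ} (a : Fin n → Bool) (i : Fin n)
    (p : EuclideanSpace ℝ (Fin n)) (hp : IsBooleanPoint p) (h : toPoint a i ≠ p i) :
    hdist (Function.update a i (!(a i))) p + 1 = hdist a p := by
  unfold hdist
  have hmem : i ∈ Finset.univ.filter fun j => toPoint a j ≠ p j := by
    simp [h]
  have hset : (Finset.univ.filter fun j => toPoint (Function.update a i (!(a i))) j ≠ p j)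
      = (Finset.univ.filter fun j => toPoint a j ≠ p j).erase i := by
    ext j
    simp only [Finset.mem_filter, Finset.mem_erase, Finset.mem_univ, true_and]
    constructor
    · intro hj
      have hji : j ≠ i := by
        rintro rfl
        exact hj (flipped_eq a j p hp h)
      rw [toPoint_update, if_neg hji] at hj
      exact ⟨hji, hj⟩
    · rintro ⟨hji, hj⟩
      rw [toPoint_update, if_neg hji]
      exact hj
  rw [hset, Finset.card_erase_of_mem hmem]
  have := Finset.card_pos.mpr ⟨i, hmem⟩
  omega

lemma hdist_update_le {n : ℕ} (a : Fin n → Bool) (i : Fin n)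
    (p : EuclideanSpace ℝ (Fin n)) :
    hdist a p ≤ hdist (Function.update a i (!(a i))) p + 1 := by
  unfold hdist
  have hsub : (Finset.univ.filter fun j => toPoint a j ≠ p j) ⊆
      insert i (Finset.univ.filter fun j => toPoint (Function.update a i (!(a i))) j ≠ p j) := by
    intro j hj
    simp only [Finset.mem_filter, Finset.mem_univ, true_and] at hj
    by_cases hji : j = i
    · rw [hji]; exact Finset.mem_insert_self i _
    · apply Finset.mem_insert_of_mem
      simp only [Finset.mem_filter, Finset.mem_univ, true_and]
      rw [toPoint_update, if_neg hji]
      exact hj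
  calc (Finset.univ.filter fun j => toPoint a j ≠ p j).card
      ≤ (insert i (Finset.univ.filter fun j => toPoint (Function.update a i (!(a i))) j ≠ p j)).card :=
        Finset.card_le_card hsub
    _ ≤ _ + 1 := Finset.card_insert_le _ _

lemma parity_update {n : ℕ} (a : Fin n → Bool) (i : Fin n) :
    parity n (Function.update a i (!(a i))) = !(parity n a) := by
  set a' := Function.update a i (!(a i)) with ha'
  have key : Odd (wt a') ↔ ¬ Odd (wt a) := by
    cases hai : a i
    · -- a i = false : wt a' = wt a + 1
      have hs : (Finset.univ.filter fun j => a' j = true)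
          = insert i (Finset.univ.filter fun j => a j = true) := by
        ext j
        simp only [Finset.mem_filter, Finset.mem_insert, Finset.mem_univ, true_and, ha']
        by_cases hji : j = i
        · subst hji; simp [Function.update, hai]
        · simp [Function.update, hji]
      have hni : i ∉ Finset.univ.filter fun j => a j = true := by simp [hai]
      have : wt a' = wt a + 1 := by
        unfold wt; rw [hs, Finset.card_insert_of_notMem hni]
      rw [this, Nat.odd_add_one]
    · -- a i = true : wt a = wt a' + 1
      have hs : (Finset.univ.filter fun j => a' j = true)
          = (Finset.univ.filter fun j => a j = true).erase i := by
        ext j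
        simp only [Finset.mem_filter, Finset.mem_erase, Finset.mem_univ, true_and, ha']
        by_cases hji : j = i
        · subst hji; simp [Function.update, hai]
        · simp [Function.update, hji]
      have hmi : i ∈ Finset.univ.filter fun j => a j = true := by simp [hai]
      have hwa : wt a = wt a' + 1 := by
        unfold wt
        rw [hs, Finset.card_erase_of_mem hmi]
        have := Finset.card_pos.mpr ⟨i, hmi⟩
        omega
      rw [hwa, Nat.odd_add_one]
      tauto
  simp only [parity]
  by_cases h : Odd (wt a)
  · have h2 : ¬ Odd (wt a') := fun h' => (key.mp h') h
    simp [h, h2]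
  · have h2 : Odd (wt a') := key.mpr h
    simp [h, h2]

lemma key_step {n : ℕ} (P N : Finset (EuclideanSpace ℝ (Fin n)))
    (hP : ∀ p ∈ P, IsBooleanPoint p) (hN : ∀ p ∈ N, IsBooleanPoint p)
    (a : Fin n → Bool) (hmem : toPoint a ∉ P)
    (h1 : ∃ b ∈ P, ∀ c ∈ N, dist (toPoint a) b < dist (toPoint a) c)
    (h2 : ∀ a' : Fin n → Bool, parity n a' = !(parity n a) →
      ∃ c ∈ N, ∀ b ∈ P, dist (toPoint a') c < dist (toPoint a') b) : False := by
  obtain ⟨b, hbP, hb⟩ := h1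
  have hbBool := hP b hbP
  have hne : b ≠ toPoint a := fun h => hmem (h ▸ hbP)
  have hex : ∃ i, toPoint a i ≠ b i := by
    by_contra h
    push_neg at h
    exact hne (PiLp.ext fun i => (h i).symm)
  obtain ⟨i, hi⟩ := hex
  obtain ⟨c, hcN, hc⟩ := h2 (Function.update a i (!(a i))) (parity_update a i)
  have hcBool := hN c hcN
  have h3 : hdist a b < hdist a c := (dist_lt_iff a b c hbBool hcBool).mp (hb c hcN)
  have h4 : hdist (Function.update a i (!(a i))) c < hdist (Function.update a i (!(a i))) b :=
    (dist_lt_iff _ c b hcBool hbBool).mp (hc b hbP)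
  have h5 : hdist (Function.update a i (!(a i))) b + 1 = hdist a b :=
    hdist_update_of_ne a i b hbBool hi
  have h6 : hdist a c ≤ hdist (Function.update a i (!(a i))) c + 1 :=
    hdist_update_le a i c
  omega

lemma parity_complete {n : ℕ} (P N : Finset (EuclideanSpace ℝ (Fin n)))
    (hrep : IsNNRep (parity n) P N) (hbool : ∀ p ∈ P ∪ N, IsBooleanPoint p)
    (a : Fin n → Bool) : toPoint a ∈ P ∪ N := by
  by_contra hmem
  rw [Finset.mem_union] at hmem
  push_neg at hmem
  have hP : ∀ p ∈ P, IsBooleanPoint p := fun p hp => hbool p (Finset.mem_union_left _ hp)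
  have hN : ∀ p ∈ N, IsBooleanPoint p := fun p hp => hbool p (Finset.mem_union_right _ hp)
  cases hpar : parity n a
  · -- parity a = false : roles of P and N swap
    refine key_step N P hN hP a hmem.2 ((hrep.2 a).2 hpar) ?_
    intro a' hpa'
    rw [hpar] at hpa'
    exact (hrep.2 a').1 (by simpa using hpa')
  · refine key_step P N hP hN a hmem.1 ((hrep.2 a).1 hpar) ?_
    intro a' hpa'
    rw [hpar] at hpa'
    exact (hrep.2 a').2 (by simpa using hpa')

/-- The Boolean nearest neighbor complexity of the `n`-variable parity
function equals `2 ^ n`; indeed, every Boolean nearest neighbor representation of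
parity must take every point of `{0,1}^n` as a prototype. -/
theorem BNN_parity (n : ℕ) :
    BNN (parity n) = 2 ^ n ∧
    ∀ P N : Finset (EuclideanSpace ℝ (Fin n)),
      IsNNRep (parity n) P N → (∀ p ∈ P ∪ N, IsBooleanPoint p) →
      ∀ a : Fin n → Bool, toPoint a ∈ P ∪ N := by
  refine ⟨?_, fun P N hrep hbool a => parity_complete P N hrep hbool a⟩
  -- the canonical representation
  set Pc : Finset (EuclideanSpace ℝ (Fin n)) :=
    (Finset.univ.filter fun a => parity n a = true).image toPoint with hPc
  set Nc : Finset (EuclideanSpace ℝ (Fin n)) :=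
    (Finset.univ.filter fun a => ¬ (parity n a = true)).image toPoint with hNc
  have hunion : Pc ∪ Nc = Finset.univ.image toPoint := by
    rw [hPc, hNc, ← Finset.image_union, Finset.filter_union_filter_not_eq]
  have hcard : (Pc ∪ Nc).card = 2 ^ n := by
    rw [hunion, Finset.card_image_of_injective _ toPoint_inj, Finset.card_univ]
    simp
  have hboolc : ∀ p ∈ Pc ∪ Nc, IsBooleanPoint p := by
    intro p hp
    rw [hunion, Finset.mem_image] at hp
    obtain ⟨a, _, rfl⟩ := hp
    exact isBooleanPoint_toPoint a
  have hrepc : IsNNRep (parity n) Pc Nc := by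
    constructor
    · rw [Finset.disjoint_left]
      intro x hxP hxN
      rw [hPc, Finset.mem_image] at hxP
      rw [hNc, Finset.mem_image] at hxN
      obtain ⟨a1, ha1, rfl⟩ := hxP
      obtain ⟨a2, ha2, he⟩ := hxN
      rw [Finset.mem_filter] at ha1 ha2
      have := toPoint_inj he
      rw [this] at ha2
      exact ha2.2 ha1.2
    · intro a
      constructor
      · intro hpa
        refine ⟨toPoint a, ?_, ?_⟩
        · rw [hPc, Finset.mem_image]
          exact ⟨a, Finset.mem_filter.mpr ⟨Finset.mem_univ a, hpa⟩, rfl⟩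
        · intro c hc
          rw [hNc, Finset.mem_image] at hc
          obtain ⟨a2, ha2, rfl⟩ := hc
          rw [Finset.mem_filter] at ha2
          have hne : toPoint a ≠ toPoint a2 := by
            intro h
            rw [toPoint_inj h] at hpa
            exact ha2.2 hpa
          rw [dist_self]
          exact dist_pos.mpr hne
      · intro hpa
        refine ⟨toPoint a, ?_, ?_⟩
        · rw [hNc, Finset.mem_image]
          refine ⟨a, Finset.mem_filter.mpr ⟨Finset.mem_univ a, ?_⟩, rfl⟩
          simp [hpa]
        · intro c hc
          rw [hPc, Finset.mem_image] at hc
          obtain ⟨a2, ha2, rfl⟩ := hc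
          rw [Finset.mem_filter] at ha2
          have hne : toPoint a ≠ toPoint a2 := by
            intro h
            rw [toPoint_inj h] at hpa
            rw [hpa] at ha2
            exact absurd ha2.2 (by simp)
          rw [dist_self]
          exact dist_pos.mpr hne
  have hmem : (2 ^ n) ∈ {m | ∃ P N, IsNNRep (parity n) P N ∧
      (∀ p ∈ P ∪ N, IsBooleanPoint p) ∧ (P ∪ N).card = m} :=
    ⟨Pc, Nc, hrepc, hboolc, hcard⟩
  have hlb : ∀ m ∈ {m | ∃ P N, IsNNRep (parity n) P N ∧
      (∀ p ∈ P ∪ N, IsBooleanPoint p) ∧ (P ∪ N).card = m}, 2 ^ n ≤ m := by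
    rintro m ⟨P, N, hrep, hbool, rfl⟩
    have hsub : Finset.univ.image toPoint ⊆ P ∪ N := by
      intro x hx
      rw [Finset.mem_image] at hx
      obtain ⟨a, _, rfl⟩ := hx
      exact parity_complete P N hrep hbool a
    calc 2 ^ n = (Finset.univ.image (toPoint (n := n))).card := by
          rw [Finset.card_image_of_injective _ toPoint_inj, Finset.card_univ]; simp
      _ ≤ (P ∪ N).card := Finset.card_le_card hsub
  exact le_antisymm (Nat.sInf_le hmem) (le_csInf ⟨_, hmem⟩ hlb)
end
end

section
/- For every non-constant threshold function f on n variables, the nearest neighbor complexity satisfies NN(f) = 2. -/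
open Finset

noncomputable section

lemma key_geom {n : ℕ} (w : EuclideanSpace ℝ (Fin n)) (hw : w ≠ 0) (t' : ℝ)
    (a : EuclideanSpace ℝ (Fin n)) :
    dist a ((t' / ‖w‖ ^ 2) • w + w) < dist a ((t' / ‖w‖ ^ 2) • w - w) ↔
      t' < (inner ℝ a w : ℝ) := by
  set c : EuclideanSpace ℝ (Fin n) := (t' / ‖w‖ ^ 2) • w with hc
  have hwn : ‖w‖ ^ 2 ≠ 0 := by simpa using hw
  have hcw : (inner ℝ c w : ℝ) = t' := by
    rw [hc, real_inner_smul_left, real_inner_self_eq_norm_sq, div_mul_cancel₀ _ hwn]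
  have h1 : a - (c + w) = (a - c) - w := by abel
  have h2 : a - (c - w) = (a - c) + w := by abel
  rw [dist_eq_norm, dist_eq_norm, h1, h2]
  set x := a - c with hx
  have hsub : ‖x - w‖ ^ 2 = ‖x‖ ^ 2 - 2 * inner ℝ x w + ‖w‖ ^ 2 := norm_sub_sq_real x w
  have hadd : ‖x + w‖ ^ 2 = ‖x‖ ^ 2 + 2 * inner ℝ x w + ‖w‖ ^ 2 := norm_add_sq_real x w
  have hxw : (inner ℝ x w : ℝ) = (inner ℝ a w : ℝ) - t' := by
    rw [hx, inner_sub_left, hcw]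
  constructor
  · intro h
    have h2 : ‖x - w‖ ^ 2 < ‖x + w‖ ^ 2 := by
      apply pow_lt_pow_left₀ h (norm_nonneg _) (by norm_num)
    nlinarith [hxw]
  · intro h
    have h3 : ‖x - w‖ ^ 2 < ‖x + w‖ ^ 2 := by nlinarith [hxw]
    nlinarith [norm_nonneg (x - w), norm_nonneg (x + w)]

lemma key_geom' {n : ℕ} (w : EuclideanSpace ℝ (Fin n)) (hw : w ≠ 0) (t' : ℝ)
    (a : EuclideanSpace ℝ (Fin n)) :
    dist a ((t' / ‖w‖ ^ 2) • w - w) < dist a ((t' / ‖w‖ ^ 2) • w + w) ↔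
      (inner ℝ a w : ℝ) < t' := by
  set c : EuclideanSpace ℝ (Fin n) := (t' / ‖w‖ ^ 2) • w with hc
  have hwn : ‖w‖ ^ 2 ≠ 0 := by simpa using hw
  have hcw : (inner ℝ c w : ℝ) = t' := by
    rw [hc, real_inner_smul_left, real_inner_self_eq_norm_sq, div_mul_cancel₀ _ hwn]
  have h1 : a - (c + w) = (a - c) - w := by abel
  have h2 : a - (c - w) = (a - c) + w := by abel
  rw [dist_eq_norm, dist_eq_norm, h1, h2]
  set x := a - c with hx
  have hsub : ‖x - w‖ ^ 2 = ‖x‖ ^ 2 - 2 * inner ℝ x w + ‖w‖ ^ 2 := norm_sub_sq_real x w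
  have hadd : ‖x + w‖ ^ 2 = ‖x‖ ^ 2 + 2 * inner ℝ x w + ‖w‖ ^ 2 := norm_add_sq_real x w
  have hxw : (inner ℝ x w : ℝ) = (inner ℝ a w : ℝ) - t' := by
    rw [hx, inner_sub_left, hcw]
  constructor
  · intro h
    have h2 : ‖x + w‖ ^ 2 < ‖x - w‖ ^ 2 := by
      apply pow_lt_pow_left₀ h (norm_nonneg _) (by norm_num)
    nlinarith [hxw]
  · intro h
    have h3 : ‖x + w‖ ^ 2 < ‖x - w‖ ^ 2 := by nlinarith [hxw]
    nlinarith [norm_nonneg (x - w), norm_nonneg (x + w)]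

/-- For every non-constant threshold function `f` on `n` variables,
the nearest neighbor complexity satisfies `NN(f) = 2`. -/
theorem NN_threshold (n : ℕ) (f : (Fin n → Bool) → Bool)
    (hth : ∃ (w : Fin n → ℝ) (t : ℝ),
      ∀ x : Fin n → Bool, f x = true ↔ t ≤ ∑ i, w i * boolToR (x i))
    (hnc : ∃ x y : Fin n → Bool, f x ≠ f y) :
    NN f = 2 := by
  classical
  obtain ⟨w, t, hw⟩ := hth
  obtain ⟨x₀, y₀, hxy⟩ := hnc
  set g : (Fin n → Bool) → ℝ := fun x => ∑ i, w i * boolToR (x i) with hgdef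
  -- both classes are nonempty
  have hex1 : ∃ a, f a = true := by
    rcases Bool.eq_false_or_eq_true (f x₀) with h | h
    · exact ⟨x₀, h⟩
    · rcases Bool.eq_false_or_eq_true (f y₀) with h' | h'
      · exact ⟨y₀, h'⟩
      · exact absurd (h.trans h'.symm) hxy
  have hex0 : ∃ a, f a = false := by
    rcases Bool.eq_false_or_eq_true (f x₀) with h | h
    · rcases Bool.eq_false_or_eq_true (f y₀) with h' | h'
      · exact absurd (h.trans h'.symm) hxy
      · exact ⟨y₀, h'⟩
    · exact ⟨x₀, h⟩
  -- the weight vector is nonzero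
  have hWne : (WithLp.toLp 2 w : EuclideanSpace ℝ (Fin n)) ≠ 0 := by
    intro h0
    have hz : ∀ x, g x = 0 := by
      intro x
      apply Finset.sum_eq_zero
      intro i _
      have : w i = 0 := by simpa using congrArg (fun v : EuclideanSpace ℝ (Fin n) => v i) h0
      simp [this]
    obtain ⟨a1, ha1⟩ := hex1
    obtain ⟨a0, ha0⟩ := hex0
    have h1 : t ≤ 0 := by
      have h := (hw a1).mp ha1
      have h2 : (∑ i : Fin n, w i * boolToR (a1 i)) = 0 := hz a1
      linarith
    have h0' : f a0 = true := (hw a0).mpr (by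
      have h2 : (∑ i : Fin n, w i * boolToR (a0 i)) = 0 := hz a0
      linarith)
    simp [ha0] at h0'
  -- choose strict threshold t'
  set A : Finset (Fin n → Bool) := Finset.univ.filter (fun x => f x = true) with hA
  set B : Finset (Fin n → Bool) := Finset.univ.filter (fun x => f x = false) with hB
  have hAne : (A.image g).Nonempty := by
    obtain ⟨a, ha⟩ := hex1
    exact ⟨g a, Finset.mem_image_of_mem g (by simp [hA, ha])⟩
  have hBne : (B.image g).Nonempty := by
    obtain ⟨a, ha⟩ := hex0
    exact ⟨g a, Finset.mem_image_of_mem g (by simp [hB, ha])⟩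
  set m1 : ℝ := (A.image g).min' hAne with hm1
  set m0 : ℝ := (B.image g).max' hBne with hm0
  have hm1t : t ≤ m1 := by
    obtain ⟨a, ha, hga⟩ := Finset.mem_image.mp ((A.image g).min'_mem hAne)
    rw [hm1, ← hga]
    exact (hw a).mp (by simpa [hA] using ha)
  have hm0t : m0 < t := by
    obtain ⟨a, ha, hga⟩ := Finset.mem_image.mp ((B.image g).max'_mem hBne)
    rw [hm0, ← hga]
    have hfa : f a = false := by simpa [hB] using ha
    by_contra h
    have := (hw a).mpr (le_of_not_gt h)
    simp [hfa] at this
  set t' : ℝ := (m0 + m1) / 2 with ht'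
  have ht1 : ∀ a, f a = true → t' < g a := by
    intro a ha
    have h1 : m1 ≤ g a := Finset.min'_le _ _ (Finset.mem_image_of_mem g (by simp [hA, ha]))
    have : m0 < m1 := lt_of_lt_of_le hm0t hm1t
    rw [ht']; linarith
  have ht0 : ∀ a, f a = false → g a < t' := by
    intro a ha
    have h1 : g a ≤ m0 := Finset.le_max' _ _ (Finset.mem_image_of_mem g (by simp [hB, ha]))
    have : m0 < m1 := lt_of_lt_of_le hm0t hm1t
    rw [ht']; linarith
  -- the two prototypes
  set W : EuclideanSpace ℝ (Fin n) := WithLp.toLp 2 w with hWdef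
  set p : EuclideanSpace ℝ (Fin n) := (t' / ‖W‖ ^ 2) • W + W with hp
  set q : EuclideanSpace ℝ (Fin n) := (t' / ‖W‖ ^ 2) • W - W with hq
  have hpq : p ≠ q := by
    intro h
    apply hWne
    have : W + W = 0 := by
      have := sub_eq_zero.mpr h
      rw [hp, hq] at this
      have h2 : ((t' / ‖W‖ ^ 2) • W + W) - ((t' / ‖W‖ ^ 2) • W - W) = W + W := by abel
      rwa [h2] at this
    have h3 : (2 : ℝ) • W = 0 := by rw [two_smul]; exact this
    simpa using (smul_eq_zero.mp h3).resolve_left (by norm_num)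
  have hinner : ∀ a : Fin n → Bool, (inner ℝ (toPoint a) W : ℝ) = g a := by
    intro a
    rw [hWdef, hgdef]
    rw [PiLp.inner_apply]
    simp [toPoint]
  have hdist : ∀ a : Fin n → Bool,
      (dist (toPoint a) p < dist (toPoint a) q ↔ t' < g a) := by
    intro a
    rw [hp, hq, key_geom W hWne t' (toPoint a), hinner a]
  -- membership : 2 is achieved
  have hmem : 2 ∈ {m | ∃ P N, IsNNRep f P N ∧ (P ∪ N).card = m} := by
    refine ⟨{p}, {q}, ⟨?_, ?_⟩, ?_⟩
    · simpa using hpq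
    · intro a
      constructor
      · intro ha
        refine ⟨p, Finset.mem_singleton_self p, ?_⟩
        intro c hc
        rw [Finset.mem_singleton.mp hc]
        exact (hdist a).mpr (ht1 a ha)
      · intro ha
        refine ⟨q, Finset.mem_singleton_self q, ?_⟩
        intro c hc
        rw [Finset.mem_singleton.mp hc]
        have := (key_geom' W hWne t' (toPoint a)).mpr (by rw [hinner a]; exact ht0 a ha)
        rw [hp, hq]
        exact this
    · rw [Finset.card_union_of_disjoint (by simpa using hpq)]
      simp
  have hne : {m | ∃ P N, IsNNRep f P N ∧ (P ∪ N).card = m}.Nonempty := ⟨2, hmem⟩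
  have hlb : ∀ m ∈ {m | ∃ P N, IsNNRep f P N ∧ (P ∪ N).card = m}, 2 ≤ m := by
    rintro m ⟨P, N, ⟨hdisj, hrep⟩, hcard⟩
    obtain ⟨a1, ha1⟩ := hex1
    obtain ⟨a0, ha0⟩ := hex0
    obtain ⟨b1, hb1, -⟩ := (hrep a1).1 ha1
    obtain ⟨b0, hb0, -⟩ := (hrep a0).2 ha0
    have hP : 1 ≤ P.card := Finset.card_pos.mpr ⟨b1, hb1⟩
    have hN : 1 ≤ N.card := Finset.card_pos.mpr ⟨b0, hb0⟩
    rw [← hcard, Finset.card_union_of_disjoint hdisj]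
    omega
  exact le_antisymm (Nat.sInf_le hmem) (hlb _ (Nat.sInf_mem hne))
end
end

section
/- Let c ∈ {0,1}^n ⊆ ℝ^n, let S_c be the set of all neighbors of c in the hypercube (points at Hamming distance 1 from c), let A ⊆ S_c with |A| = ℓ ≥ 3, and let c_A = (1/|A|)·Σ_{x∈A} x be the centroid of A. Then (a) d(c_A, a) < 1 for every a ∈ A, and (b) d(c_A, a) ≥ 1 for every a ∈ {0,1}^n \ (A ∪ {c}), where d is the Euclidean distance on ℝ^n. -/
open Finset

noncomputable section

lemma boolToR_not (b : Bool) : boolToR (!b) = 1 - boolToR b := by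
  cases b <;> simp [boolToR]

lemma bool_eq_not_of_ne {a b : Bool} (h : a ≠ b) : a = !b := by
  cases a <;> cases b <;> simp_all

set_option maxHeartbeats 2000000 in
/-- Let `c ∈ {0,1}^n`, let `A` be a set of at least `3` neighbors of
`c` (points at Hamming distance `1` from `c`), and let `c_A` be the centroid of `A`.
Then `d(c_A, a) < 1` for every `a ∈ A`, while `d(c_A, a) ≥ 1` for every point
`a ∈ {0,1}^n \ (A ∪ {c})`. -/
theorem centroid_ball_lemma (n : ℕ) (c : Fin n → Bool) (A : Finset (Fin n → Bool))
    (hA : ∀ a ∈ A, hammingDist a c = 1) (hcard : 3 ≤ A.card) :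
    (∀ a ∈ A, dist ((A.card : ℝ)⁻¹ • ∑ x ∈ A, toPoint x) (toPoint a) < 1) ∧
    (∀ a : Fin n → Bool, a ∉ A → a ≠ c →
      1 ≤ dist ((A.card : ℝ)⁻¹ • ∑ x ∈ A, toPoint x) (toPoint a)) := by
  classical
  set ℓ : ℝ := (A.card : ℝ) with hℓdef
  have hℓ3 : (3:ℝ) ≤ ℓ := by rw [hℓdef]; exact_mod_cast hcard
  have hℓpos : (0:ℝ) < ℓ := by linarith
  have hℓne : ℓ ≠ 0 := ne_of_gt hℓpos
  set upd : Fin n → (Fin n → Bool) := fun j => Function.update c j (!(c j)) with hupddef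
  have hinj : Function.Injective upd := by
    intro i j h
    by_contra hij
    have h1 := congrFun h i
    simp [hupddef, Function.update_apply, hij] at h1
  set I : Finset (Fin n) := univ.filter (fun j => upd j ∈ A) with hIdef
  have hmem : ∀ a ∈ A, ∃ j ∈ I, a = upd j := by
    intro a ha
    have h1 : (univ.filter fun i => a i ≠ c i).card = 1 := hA a ha
    obtain ⟨j, hj⟩ := Finset.card_eq_one.mp h1
    have hja : a j ≠ c j := by
      have : j ∈ univ.filter fun i => a i ≠ c i := hj ▸ Finset.mem_singleton_self j
      simpa using this
    have haj : a = upd j := by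
      funext i
      by_cases hij : i = j
      · subst hij
        simp [hupddef, Function.update_self, bool_eq_not_of_ne hja]
      · have : i ∉ univ.filter fun i => a i ≠ c i := by
          rw [hj]; simp [hij]
        simp only [Finset.mem_filter, Finset.mem_univ, true_and, not_not] at this
        simp [hupddef, Function.update_of_ne hij, this]
    exact ⟨j, by simp [hIdef, ← haj, ha], haj⟩
  have hAI : A = I.image upd := by
    ext x
    constructor
    · intro hx
      obtain ⟨j, hj, hxj⟩ := hmem x hx
      exact Finset.mem_image.mpr ⟨j, hj, hxj.symm⟩
    · intro hx
      obtain ⟨j, hj, hxj⟩ := Finset.mem_image.mp hx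
      rw [← hxj]
      exact (Finset.mem_filter.mp hj).2
  have hIcard : (I.card : ℝ) = ℓ := by
    rw [hℓdef, hAI, Finset.card_image_of_injective _ hinj]
  set cA : EuclideanSpace ℝ (Fin n) := (A.card : ℝ)⁻¹ • ∑ x ∈ A, toPoint x with hcA
  -- coordinates of the centroid
  have hcoord : ∀ i, cA i = boolToR (c i) +
      (if i ∈ I then (1 - 2 * boolToR (c i)) / ℓ else 0) := by
    intro i
    have h1 : (∑ x ∈ A, toPoint x) i = ∑ x ∈ A, toPoint x i :=
      by simp
    have h2 : ∑ x ∈ A, toPoint x i = ∑ j ∈ I, toPoint (upd j) i := by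
      rw [hAI, Finset.sum_image (fun x _ y _ h => hinj h)]
    have h3 : ∀ j ∈ I, toPoint (upd j) i =
        boolToR (c i) + (if j = i then 1 - 2 * boolToR (c i) else 0) := by
      intro j _
      by_cases hij : j = i
      · subst hij
        simp [toPoint, hupddef, Function.update_self, boolToR_not]
        ring
      · simp [toPoint, hupddef, Function.update_of_ne (Ne.symm hij), hij]
    have h4 : ∑ j ∈ I, toPoint (upd j) i =
        I.card * boolToR (c i) + (if i ∈ I then 1 - 2 * boolToR (c i) else 0) := by
      rw [Finset.sum_congr rfl h3, Finset.sum_add_distrib, Finset.sum_const,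
        Finset.sum_ite_eq' I i (fun _ => 1 - 2 * boolToR (c i))]
      simp [mul_comm]
    have h5 : cA i = (A.card : ℝ)⁻¹ * (∑ x ∈ A, toPoint x) i := by
      simp [hcA]
    rw [h5, h1, h2, h4, hIcard]
    by_cases hiI : i ∈ I <;> simp only [hiI, if_true, if_false] <;>
      rw [mul_add, ← mul_assoc, inv_mul_cancel₀ hℓne, one_mul] <;> ring
  -- squared distance formula
  have hdsq : ∀ a : Fin n → Bool,
      dist cA (toPoint a) ^ 2 = ∑ i, (cA i - boolToR (a i)) ^ 2 := by
    intro a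
    rw [EuclideanSpace.dist_eq, Real.sq_sqrt (by positivity)]
    refine Finset.sum_congr rfl fun i _ => ?_
    rw [Real.dist_eq, sq_abs]
    rfl
  -- per-coordinate values
  have hterm : ∀ (a : Fin n → Bool) (i : Fin n),
      (cA i - boolToR (a i)) ^ 2 =
        if i ∈ I then (if a i = c i then 1 / ℓ ^ 2 else (1 - 1/ℓ) ^ 2)
        else (if a i = c i then 0 else 1) := by
    intro a i
    rw [hcoord i]
    by_cases hiI : i ∈ I <;> by_cases hac : a i = c i <;>
      simp only [hiI, hac, if_true, if_false] <;>
      [skip; rw [bool_eq_not_of_ne hac, boolToR_not]; skip;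
        rw [bool_eq_not_of_ne hac, boolToR_not]] <;>
      cases c i <;> simp [boolToR] <;> field_simp <;> ring
  -- summed formula
  have key : ∀ a : Fin n → Bool,
      dist cA (toPoint a) ^ 2 =
        (((univ \ I).filter fun i => ¬ (a i = c i)).card : ℝ)
        + ((I.filter fun i => a i = c i).card : ℝ) / ℓ ^ 2
        + ((I.filter fun i => ¬ (a i = c i)).card : ℝ) * (1 - 1/ℓ) ^ 2 := by
    intro a
    rw [hdsq a]
    rw [Finset.sum_congr rfl (fun i _ => hterm a i)]
    rw [← Finset.sum_sdiff (Finset.subset_univ I)]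
    have hs1 : ∑ i ∈ univ \ I, (if i ∈ I then (if a i = c i then 1 / ℓ ^ 2 else (1 - 1/ℓ) ^ 2)
        else (if a i = c i then 0 else 1)) =
        ∑ i ∈ univ \ I, (if a i = c i then (0:ℝ) else 1) := by
      refine Finset.sum_congr rfl fun i hi => ?_
      have : i ∉ I := (Finset.mem_sdiff.mp hi).2
      simp [this]
    have hs2 : ∑ i ∈ I, (if i ∈ I then (if a i = c i then 1 / ℓ ^ 2 else (1 - 1/ℓ) ^ 2)
        else (if a i = c i then 0 else 1)) =
        ∑ i ∈ I, (if a i = c i then 1 / ℓ ^ 2 else (1 - 1/ℓ) ^ 2) := by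
      refine Finset.sum_congr rfl fun i hi => ?_
      simp [hi]
    rw [hs1, hs2, Finset.sum_ite, Finset.sum_ite]
    simp [Finset.sum_const, mul_comm, div_eq_mul_inv]
    ring
  constructor
  · -- part (a)
    intro a ha
    obtain ⟨j, hjI, haj⟩ := hmem a ha
    have hne : ∀ i, (¬ (a i = c i)) ↔ i = j := by
      intro i
      constructor
      · intro h
        by_contra hij
        rw [haj] at h
        simp [hupddef, Function.update_of_ne hij] at h
      · intro h; subst h
        rw [haj]
        simp [hupddef, Function.update_self]
    have hK : (I.filter fun i => ¬ (a i = c i)) = {j} := by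
      ext i
      simp only [Finset.mem_filter, Finset.mem_singleton, hne i]
      exact ⟨fun h => h.2, fun h => ⟨h ▸ hjI, h⟩⟩
    have hM : ((univ \ I).filter fun i => ¬ (a i = c i)) = ∅ := by
      ext i
      simp only [Finset.mem_filter, Finset.mem_sdiff, Finset.mem_univ, true_and,
        Finset.notMem_empty, iff_false, not_and, hne i]
      intro hi h; exact hi (h ▸ hjI)
    have hKc : ((I.filter fun i => a i = c i).card : ℝ) = ℓ - 1 := by
      have := Finset.card_filter_add_card_filter_not
        (s := I) (p := fun i => a i = c i)
      rw [hK] at this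
      simp only [Finset.card_singleton] at this
      have h2 : ((I.filter fun i => a i = c i).card : ℝ) + 1 = (I.card : ℝ) := by
        exact_mod_cast congrArg (Nat.cast : ℕ → ℝ) this
      rw [hIcard] at h2; linarith
    have hd2 : dist cA (toPoint a) ^ 2 = 1 - 1/ℓ := by
      rw [key a, hK, hM, hKc]
      simp
      field_simp
      ring
    have hlt : dist cA (toPoint a) ^ 2 < 1 := by
      rw [hd2]
      have : 0 < 1/ℓ := div_pos one_pos hℓpos
      linarith
    nlinarith [dist_nonneg (x := cA) (y := toPoint a)]
  · -- part (b)
    intro a hna hnc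
    set K : Finset (Fin n) := I.filter (fun i => ¬ (a i = c i)) with hKdef
    set M : Finset (Fin n) := (univ \ I).filter (fun i => ¬ (a i = c i)) with hMdef
    have hKI : (K.card : ℝ) + ((I.filter fun i => a i = c i).card : ℝ) = ℓ := by
      have := Finset.card_filter_add_card_filter_not
        (s := I) (p := fun i => ¬ (a i = c i))
      have h2 : (K.card : ℝ) + ((I.filter fun i => ¬¬(a i = c i)).card : ℝ) = (I.card : ℝ) := by
        exact_mod_cast congrArg (Nat.cast : ℕ → ℝ) this
      simpa [hIcard, not_not] using h2
    have hcnn : (0:ℝ) ≤ ((I.filter fun i => a i = c i).card : ℝ) := Nat.cast_nonneg _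
    have hd2 := key a
    have h1le : (1:ℝ) ≤ dist cA (toPoint a) ^ 2 → 1 ≤ dist cA (toPoint a) := by
      intro h
      nlinarith [dist_nonneg (x := cA) (y := toPoint a)]
    apply h1le
    by_cases hM0 : M = ∅
    · -- all disagreement is inside I
      have hMa : ∀ i, i ∉ I → a i = c i := by
        intro i hiI
        by_contra h
        have : i ∈ M := by simp [hMdef, hiI, h]
        simp [hM0] at this
      have hK0 : K ≠ ∅ := by
        intro h
        apply hnc
        funext i
        by_cases hiI : i ∈ I
        · by_contra hac
          have : i ∈ K := by simp [hKdef, hiI, hac]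
          simp [h] at this
        · exact hMa i hiI
      have hK1 : K.card ≠ 1 := by
        intro h
        obtain ⟨j, hj⟩ := Finset.card_eq_one.mp h
        have hjK : j ∈ K := hj ▸ Finset.mem_singleton_self j
        have hjI : j ∈ I := (Finset.mem_filter.mp hjK).1
        have hjne : ¬ (a j = c j) := (Finset.mem_filter.mp hjK).2
        have haj : a = upd j := by
          funext i
          by_cases hij : i = j
          · subst hij
            simp [hupddef, Function.update_self, bool_eq_not_of_ne hjne]
          · simp only [hupddef, Function.update_of_ne hij]
            by_cases hiI : i ∈ I
            · by_contra hac
              have : i ∈ K := by simp [hKdef, hiI, hac]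
              rw [hj] at this
              exact hij (Finset.mem_singleton.mp this)
            · exact hMa i hiI
        apply hna
        rw [haj]
        exact (Finset.mem_filter.mp hjI).2
      have hK2 : 2 ≤ K.card := by
        have h0 : K.card ≠ 0 := fun h => hK0 (Finset.card_eq_zero.mp h)
        omega
      have hk2 : (2:ℝ) ≤ (K.card : ℝ) := by exact_mod_cast hK2
      have hMc : ((M.card : ℕ) : ℝ) = 0 := by rw [hM0]; simp
      rw [hd2]
      rw [show (((univ \ I).filter fun i => ¬ (a i = c i)).card : ℝ) = ((M.card : ℕ) : ℝ) from rfl,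
        hMc]
      have hrw : ((I.filter fun i => a i = c i).card : ℝ) = ℓ - K.card := by linarith
      rw [show ((I.filter fun i => ¬ (a i = c i)).card : ℝ) = ((K.card : ℕ) : ℝ) from rfl, hrw]
      have hval : (0:ℝ) + (ℓ - K.card) / ℓ ^ 2 + (K.card : ℝ) * (1 - 1/ℓ) ^ 2 =
          (ℓ - K.card + (K.card : ℝ) * (ℓ - 1) ^ 2) / ℓ ^ 2 := by
        field_simp
        ring
      rw [hval, one_le_div (pow_pos hℓpos 2)]
      have hp1 : (0:ℝ) ≤ ℓ ^ 2 - 2 * ℓ := by nlinarith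
      have hp2 : (0:ℝ) ≤ ((K.card : ℝ) - 2) * (ℓ ^ 2 - 2 * ℓ) :=
        mul_nonneg (by linarith) hp1
      have hp3 : (0:ℝ) ≤ ℓ * (ℓ - 3) := mul_nonneg (by linarith) (by linarith)
      nlinarith [hp2, hp3]
    · -- some disagreement outside I
      have hM1 : 1 ≤ M.card := Nat.one_le_iff_ne_zero.mpr
        (fun h => hM0 (Finset.card_eq_zero.mp h))
      have hm1 : (1:ℝ) ≤ (M.card : ℝ) := by exact_mod_cast hM1
      rw [hd2]
      have h2 : (0:ℝ) ≤ ((I.filter fun i => a i = c i).card : ℝ) / ℓ ^ 2 :=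
        div_nonneg (Nat.cast_nonneg _) (pow_nonneg hℓpos.le 2)
      have h3 : (0:ℝ) ≤ ((I.filter fun i => ¬ (a i = c i)).card : ℝ) * (1 - 1/ℓ) ^ 2 :=
        mul_nonneg (Nat.cast_nonneg _) (sq_nonneg _)
      have hm1' : (1:ℝ) ≤ (((univ \ I).filter fun i => ¬ (a i = c i)).card : ℝ) := hm1
      linarith
end
end

section
/- There exists a function ε : ℕ → ℝ with ε(n) → 0 as n → ∞ such that for every n and every Boolean function f on n variables, NN(f) ≤ (1 + ε(n)) · 2^{n+2}/n. -/
open Finset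

noncomputable section

namespace NNShannon
variable {n : ℕ}

/-- Hamming distance. -/
def Hd (a c : Fin n → Bool) : ℕ := ((univ : Finset (Fin n)).filter fun i => a i ≠ c i).card

def flipv (i : Fin n) (c : Fin n → Bool) : Fin n → Bool := Function.update c i (!(c i))

lemma hd_flipv (x : Fin n → Bool) (i : Fin n) : Hd x (flipv i x) ≤ 1 := by
  have h : ((univ : Finset (Fin n)).filter fun j => x j ≠ flipv i x j) ⊆ {i} := by
    intro j hj
    simp only [mem_filter, mem_univ, true_and] at hj
    simp only [mem_singleton]
    by_contra hne
    exact hj (by simp [flipv]; rw [Function.update_of_ne hne])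
  calc Hd x (flipv i x) ≤ ({i} : Finset (Fin n)).card := Finset.card_le_card h
    _ = 1 := by simp

lemma hd_cases {a c : Fin n → Bool} (h : Hd a c ≤ 1) : a = c ∨ ∃ i, a = flipv i c := by
  rcases Nat.le_one_iff_eq_zero_or_eq_one.mp h with h0 | h1
  · left
    have he : ((univ : Finset (Fin n)).filter fun i => a i ≠ c i) = ∅ := Finset.card_eq_zero.mp h0
    funext j
    by_contra hne
    have : j ∈ ((univ : Finset (Fin n)).filter fun i => a i ≠ c i) := by simp [hne]
    simp [he] at this
  · right
    obtain ⟨i, hi⟩ := Finset.card_eq_one.mp h1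
    refine ⟨i, funext fun j => ?_⟩
    by_cases hji : j = i
    · subst hji
      have : j ∈ ((univ : Finset (Fin n)).filter fun i => a i ≠ c i) := by simp [hi]
      simp only [mem_filter, mem_univ, true_and] at this
      simp only [flipv, Function.update_self]
      cases hcj : c j <;> cases haj : a j <;> simp_all
    · have : j ∉ ((univ : Finset (Fin n)).filter fun i => a i ≠ c i) := by simp [hi, hji]
      simp only [mem_filter, mem_univ, true_and, not_not] at this
      simp [flipv, Function.update_of_ne hji, this]

/-- syndrome map -/
def phi {G : Type} [AddCommGroup G] (W : Fin n → G) (x : Fin n → Bool) : G :=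
  ∑ i, if x i then W i else 0

lemma phi_flipv {G : Type} [AddCommGroup G] (hG : ∀ g : G, g + g = 0)
    (W : Fin n → G) (x : Fin n → Bool) (i : Fin n) :
    phi W (flipv i x) = phi W x + W i := by
  unfold phi
  have hmem : i ∈ (univ : Finset (Fin n)) := mem_univ i
  rw [← Finset.add_sum_erase _ _ hmem, ← Finset.add_sum_erase _ (fun j => if x j then W j else 0) hmem]
  have herase : ∑ j ∈ univ.erase i, (if flipv i x j then W j else 0)
      = ∑ j ∈ univ.erase i, (if x j then W j else 0) := by
    refine Finset.sum_congr rfl fun j hj => ?_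
    have : j ≠ i := Finset.ne_of_mem_erase hj
    simp [flipv, Function.update_of_ne this]
  rw [herase]
  have : flipv i x i = !(x i) := by simp [flipv]
  rw [this]
  cases hxi : x i
  · rw [if_pos (by simp), if_neg (by simp [hxi]), zero_add, add_comm]
  · rw [if_neg (by simp), if_pos rfl, zero_add, add_right_comm, hG, zero_add]

lemma covering {G : Type} [AddCommGroup G] (hG : ∀ g : G, g + g = 0)
    (W : Fin n → G) (hW : Function.Surjective W) (s : G) (x : Fin n → Bool) :
    ∃ c, phi W c = s ∧ Hd x c ≤ 1 := by
  by_cases hx : phi W x = s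
  · exact ⟨x, hx, by simp [Hd]⟩
  · obtain ⟨i, hi⟩ := hW (s - phi W x)
    refine ⟨flipv i x, ?_, hd_flipv x i⟩
    rw [phi_flipv hG, hi]
    abel


/-- pigeonhole: some syndrome fiber is small -/
lemma exists_small_fiber {G : Type} [AddCommGroup G] [Fintype G] [DecidableEq G]
    (W : Fin n → G) :
    ∃ s : G, Fintype.card G *
      ((univ : Finset (Fin n → Bool)).filter fun x => phi W x = s).card ≤ 2 ^ n := by
  by_contra hcon
  push_neg at hcon
  have hsum : ∑ s : G, ((univ : Finset (Fin n → Bool)).filter fun x => phi W x = s).card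
      = 2 ^ n := by
    rw [← Finset.card_eq_sum_card_fiberwise (fun x _ => mem_univ (phi W x))]
    simp [Finset.card_univ]
  have hlt : (univ : Finset G).sum (fun _ => 2 ^ n)
      < (univ : Finset G).sum (fun s => Fintype.card G *
          ((univ : Finset (Fin n → Bool)).filter fun x => phi W x = s).card) := by
    refine Finset.sum_lt_sum_of_nonempty ?_ fun s _ => hcon s
    exact ⟨0, mem_univ 0⟩
  rw [← Finset.mul_sum, hsum, Finset.sum_const, Finset.card_univ, smul_eq_mul] at hlt
  exact lt_irrefl _ hlt

/- ### geometry -/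

def dlt (n : ℕ) : ℝ := 1 / (20 * n)
def sgn (f : (Fin n → Bool) → Bool) (c : Fin n → Bool) : ℝ := if f c then 1 else -1
def wvec (f : (Fin n → Bool) → Bool) (c : Fin n → Bool) : Fin n → ℝ :=
  fun i => (if c i then (-1 : ℝ) else 1) * sgn f (flipv i c)
def rho (f : (Fin n → Bool) → Bool) (c : Fin n → Bool) (b : Bool) : ℝ :=
  if b then dlt n else -(dlt n + sgn f c * dlt n ^ 2)
def proto (f : (Fin n → Bool) → Bool) (c : Fin n → Bool) (b : Bool) :
    EuclideanSpace ℝ (Fin n) := WithLp.toLp 2 (fun i => toPoint c i + rho f c b * wvec f c i)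
def ipr (f : (Fin n → Bool) → Bool) (a c : Fin n → Bool) : ℝ :=
  ∑ i, (toPoint a i - toPoint c i) * wvec f c i

lemma dlt_pos (hn : 1 ≤ n) : 0 < dlt n := by
  have : (0:ℝ) < n := by exact_mod_cast hn
  unfold dlt; positivity

lemma dlt_mul (hn : 1 ≤ n) : dlt n * n = 1 / 20 := by
  have h : (n:ℝ) ≠ 0 := by
    have : (0:ℝ) < n := by exact_mod_cast hn
    linarith
  unfold dlt; field_simp

lemma dlt_le (hn : 1 ≤ n) : dlt n ≤ 1 / 20 := by
  have h1 : (1:ℝ) ≤ n := by exact_mod_cast hn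
  unfold dlt
  rw [div_le_div_iff₀ (by linarith) (by norm_num)]
  linarith

lemma sgn_cases (f : (Fin n → Bool) → Bool) (c : Fin n → Bool) :
    sgn f c = 1 ∨ sgn f c = -1 := by unfold sgn; split <;> simp

lemma wvec_cases (f : (Fin n → Bool) → Bool) (c : Fin n → Bool) (i : Fin n) :
    wvec f c i = 1 ∨ wvec f c i = -1 := by
  unfold wvec sgn; split <;> split <;> norm_num

lemma wvec_sq (f : (Fin n → Bool) → Bool) (c : Fin n → Bool) (i : Fin n) :
    wvec f c i ^ 2 = 1 := by
  rcases wvec_cases f c i with h | h <;> rw [h] <;> norm_num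

lemma sum_sq_eq_Hd (a c : Fin n → Bool) :
    ∑ i, (toPoint a i - toPoint c i) ^ 2 = (Hd a c : ℝ) := by
  have h : ∀ i ∈ (univ : Finset (Fin n)),
      (toPoint a i - toPoint c i) ^ 2 = if a i ≠ c i then (1:ℝ) else 0 := by
    intro i _
    cases hai : a i <;> cases hci : c i <;> simp [toPoint, boolToR, hai, hci]
  rw [Finset.sum_congr rfl h, Finset.sum_boole, Hd]

lemma dist_toPoint_sq (a c : Fin n → Bool) :
    dist (toPoint a) (toPoint c) ^ 2 = (Hd a c : ℝ) := by
  rw [EuclideanSpace.dist_eq, Real.sq_sqrt (Finset.sum_nonneg fun i _ => sq_nonneg _)]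
  rw [← sum_sq_eq_Hd a c]
  exact Finset.sum_congr rfl fun i _ => by rw [Real.dist_eq, sq_abs]

lemma Hd_self (c : Fin n → Bool) : Hd c c = 0 := by simp [Hd]

lemma ipr_self (f : (Fin n → Bool) → Bool) (c : Fin n → Bool) : ipr f c c = 0 := by
  simp [ipr]

lemma ipr_flipv (f : (Fin n → Bool) → Bool) (c : Fin n → Bool) (i : Fin n) :
    ipr f (flipv i c) c = sgn f (flipv i c) := by
  unfold ipr
  rw [Finset.sum_eq_single i]
  · have hfi : toPoint (flipv i c) i = boolToR (!(c i)) := by simp [toPoint, flipv]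
    rw [hfi]
    unfold wvec toPoint
    cases hci : c i <;> simp [boolToR, hci] <;> ring
  · intro j _ hji
    have hfj : toPoint (flipv i c) j = toPoint c j := by
      simp [toPoint, flipv, Function.update_of_ne hji]
    rw [hfj, sub_self, zero_mul]
  · intro h; exact absurd (mem_univ i) h

lemma dist_proto_sq (f : (Fin n → Bool) → Bool) (a c : Fin n → Bool) (b : Bool) :
    dist (toPoint a) (proto f c b) ^ 2
      = (Hd a c : ℝ) - 2 * rho f c b * ipr f a c + rho f c b ^ 2 * n := by
  rw [EuclideanSpace.dist_eq, Real.sq_sqrt (Finset.sum_nonneg fun i _ => sq_nonneg _)]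
  have hterm : ∀ i ∈ (univ : Finset (Fin n)),
      dist (toPoint a i) (proto f c b i) ^ 2
        = (toPoint a i - toPoint c i) ^ 2
          - 2 * rho f c b * ((toPoint a i - toPoint c i) * wvec f c i)
          + rho f c b ^ 2 * wvec f c i ^ 2 := by
    intro i _
    rw [Real.dist_eq, sq_abs]
    show (toPoint a i - (toPoint c i + rho f c b * wvec f c i)) ^ 2 = _
    ring
  rw [Finset.sum_congr rfl hterm, Finset.sum_add_distrib, Finset.sum_sub_distrib,
    sum_sq_eq_Hd, ← Finset.mul_sum, ← Finset.mul_sum]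
  have hw : ∑ i, wvec f c i ^ 2 = (n : ℝ) := by
    rw [Finset.sum_congr rfl fun i _ => wvec_sq f c i]
    simp
  rw [hw]
  rfl


lemma rho_bounds (hn : 1 ≤ n) (f : (Fin n → Bool) → Bool) (c : Fin n → Bool) (b : Bool) :
    -(2 * dlt n) ≤ rho f c b ∧ rho f c b ≤ 2 * dlt n := by
  have hd0 := dlt_pos (n := n) hn
  have hd1 := dlt_le (n := n) hn
  have hsq : dlt n ^ 2 ≤ dlt n := by nlinarith
  rcases sgn_cases f c with hs | hs <;>
    cases b <;> unfold rho <;> rw [hs] <;> simp <;> constructor <;> nlinarith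

lemma rho_w_bounds (hn : 1 ≤ n) (f : (Fin n → Bool) → Bool) (c : Fin n → Bool) (b : Bool)
    (i : Fin n) : -(2 * dlt n) ≤ rho f c b * wvec f c i ∧ rho f c b * wvec f c i ≤ 2 * dlt n := by
  obtain ⟨h1, h2⟩ := rho_bounds hn f c b
  rcases wvec_cases f c i with hw | hw <;> rw [hw] <;> constructor <;> nlinarith

/-- inside a ball, the prototype with the right label is strictly closer -/
lemma close_strict (hn : 1 ≤ n) (f : (Fin n → Bool) → Bool) {a c : Fin n → Bool}
    (h : Hd a c ≤ 1) :
    dist (toPoint a) (proto f c (f a)) < dist (toPoint a) (proto f c (!(f a))) := by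
  have hd0 := dlt_pos (n := n) hn
  have hdm := dlt_mul (n := n) hn
  have hd1 := dlt_le (n := n) hn
  have hn1 : (1:ℝ) ≤ n := by exact_mod_cast hn
  apply lt_of_pow_lt_pow_left₀ 2 dist_nonneg
  rw [dist_proto_sq, dist_proto_sq]
  set d := dlt n with hdd
  have h2 : d ^ 2 * n = d * (1 / 20) := by
    have : d ^ 2 * n = d * (d * n) := by ring
    rw [this, hdm]
  have h3 : d ^ 3 * n = d ^ 2 * (1 / 20) := by
    have : d ^ 3 * n = d ^ 2 * (d * n) := by ring
    rw [this, hdm]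
  have h4 : d ^ 4 * n = d ^ 3 * (1 / 20) := by
    have : d ^ 4 * n = d ^ 3 * (d * n) := by ring
    rw [this, hdm]
  rcases hd_cases h with rfl | ⟨i, rfl⟩
  · rw [ipr_self, Hd_self]
    cases hfc : f a <;>
      simp only [rho, sgn, hfc, Bool.not_true, Bool.not_false, if_true, if_false,
        Bool.false_eq_true, Bool.true_eq_false, ← hdd] <;>
      nlinarith
  · rw [ipr_flipv]
    cases hfa : f (flipv i c) <;> cases hfc : f c <;>
      simp only [rho, sgn, hfa, hfc, Bool.not_true, Bool.not_false, if_true, if_false,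
        Bool.false_eq_true, Bool.true_eq_false, ← hdd] <;>
      nlinarith

/-- prototypes are close to their codeword -/
lemma dist_proto_self (hn : 1 ≤ n) (f : (Fin n → Bool) → Bool) (c : Fin n → Bool) (b : Bool) :
    dist (toPoint c) (proto f c b) ≤ 1 / 10 := by
  have hd0 := dlt_pos (n := n) hn
  have hdm := dlt_mul (n := n) hn
  have hd1 := dlt_le (n := n) hn
  have hsq : dist (toPoint c) (proto f c b) ^ 2 ≤ 1 / 100 := by
    rw [dist_proto_sq, ipr_self, Hd_self]
    obtain ⟨h1, h2⟩ := rho_bounds hn f c b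
    have : rho f c b ^ 2 * n ≤ (2 * dlt n) ^ 2 * n := by
      have hnn : (0:ℝ) ≤ n := by positivity
      nlinarith
    have h22 : (2 * dlt n) ^ 2 * n = 4 * (dlt n * (dlt n * n)) := by ring
    rw [h22, hdm] at this
    push_cast
    nlinarith
  nlinarith [dist_nonneg (x := toPoint c) (y := proto f c b)]

lemma dist_near (hn : 1 ≤ n) (f : (Fin n → Bool) → Bool) {a c : Fin n → Bool}
    (h : Hd a c ≤ 1) (b : Bool) : dist (toPoint a) (proto f c b) ≤ 11 / 10 := by
  have htp : dist (toPoint a) (toPoint c) ≤ 1 := by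
    have hsq := dist_toPoint_sq a c
    have hle : (Hd a c : ℝ) ≤ 1 := by exact_mod_cast h
    nlinarith [dist_nonneg (x := toPoint a) (y := toPoint c)]
  calc dist (toPoint a) (proto f c b)
      ≤ dist (toPoint a) (toPoint c) + dist (toPoint c) (proto f c b) := dist_triangle _ _ _
    _ ≤ 1 + 1 / 10 := add_le_add htp (dist_proto_self hn f c b)
    _ = 11 / 10 := by norm_num

lemma dist_far (hn : 1 ≤ n) (f : (Fin n → Bool) → Bool) {a c : Fin n → Bool}
    (h : 2 ≤ Hd a c) (b : Bool) : 13 / 10 ≤ dist (toPoint a) (proto f c b) := by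
  have htp : (14 : ℝ) / 10 ≤ dist (toPoint a) (toPoint c) := by
    have hsq := dist_toPoint_sq a c
    have hle : (2 : ℝ) ≤ (Hd a c : ℝ) := by exact_mod_cast h
    nlinarith [dist_nonneg (x := toPoint a) (y := toPoint c)]
  have htri : dist (toPoint a) (toPoint c)
      ≤ dist (toPoint a) (proto f c b) + dist (toPoint c) (proto f c b) := by
    rw [dist_comm (toPoint c)]
    exact dist_triangle _ _ _
  have := dist_proto_self hn f c b
  linarith

lemma proto_true_ne_false (hn : 1 ≤ n) (f : (Fin n → Bool) → Bool) (c c' : Fin n → Bool) :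
    proto f c true ≠ proto f c' false := by
  have hd0 := dlt_pos (n := n) hn
  have hd1 := dlt_le (n := n) hn
  intro heq
  by_cases hcc : c = c'
  · subst hcc
    have i0 : Fin n := ⟨0, hn⟩
    have hi := congrFun (congrArg WithLp.ofLp heq) i0
    have hi' : rho f c true * wvec f c i0 = rho f c false * wvec f c i0 := by
      have : toPoint c i0 + rho f c true * wvec f c i0
          = toPoint c i0 + rho f c false * wvec f c i0 := hi
      linarith
    have hsq : dlt n ^ 2 ≤ dlt n := by nlinarith
    rcases wvec_cases f c i0 with hw | hw <;> rw [hw] at hi' <;>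
      rcases sgn_cases f c with hs | hs <;>
        simp only [rho, if_true, if_false, Bool.false_eq_true, hs] at hi' <;> nlinarith
  · obtain ⟨i, hi⟩ := Function.ne_iff.mp hcc
    have he := congrFun (congrArg WithLp.ofLp heq) i
    have he' : toPoint c i + rho f c true * wvec f c i
        = toPoint c' i + rho f c' false * wvec f c' i := he
    obtain ⟨b1, b2⟩ := rho_w_bounds hn f c true i
    obtain ⟨b3, b4⟩ := rho_w_bounds hn f c' false i
    cases hci : c i <;> cases hci' : c' i <;>
      simp only [toPoint, boolToR, hci, hci', if_true, if_false,
        Bool.false_eq_true, Bool.true_eq_false] at he' <;>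
      first
        | exact hi (hci.trans hci'.symm)
        | nlinarith



lemma exists_rep (hn : 1 ≤ n) (f : (Fin n → Bool) → Bool) :
    ∃ P N : Finset (EuclideanSpace ℝ (Fin n)),
      IsNNRep f P N ∧ n * (P ∪ N).card ≤ 2 ^ (n + 2) := by
  classical
  set k := Nat.log 2 n with hk
  have hkn : 2 ^ k ≤ n := Nat.pow_log_le_self 2 (by omega)
  have hn2 : n < 2 ^ (k + 1) := Nat.lt_pow_succ_log_self (by norm_num) n
  set G := (Fin k → ZMod 2) with hGdef
  have hcardG : Fintype.card G = 2 ^ k := by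
    show Fintype.card (Fin k → ZMod 2) = 2 ^ k
    rw [Fintype.card_fun]
    simp
  have hG2 : ∀ g : G, g + g = 0 := by
    intro g
    funext j
    have h2 : ∀ a : ZMod 2, a + a = 0 := by decide
    exact h2 (g j)
  obtain ⟨W, hW⟩ : ∃ W : Fin n → G, Function.Surjective W := by
    have hle : Fintype.card G ≤ Fintype.card (Fin n) := by
      rw [hcardG, Fintype.card_fin]; exact hkn
    obtain ⟨g⟩ := Function.Embedding.nonempty_of_card_le hle
    exact ⟨Function.invFun g, fun d => ⟨g d, Function.leftInverse_invFun g.injective d⟩⟩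
  obtain ⟨s, hs⟩ := exists_small_fiber W
  rw [hcardG] at hs
  set C : Finset (Fin n → Bool) := univ.filter (fun x => phi W x = s) with hCdef
  have hcov : ∀ a : Fin n → Bool, ∃ c ∈ C, Hd a c ≤ 1 := by
    intro a
    obtain ⟨c, hc1, hc2⟩ := covering hG2 W hW s a
    exact ⟨c, by simp [hCdef, hc1], hc2⟩
  set P := C.image (fun c => proto f c true) with hP
  set N := C.image (fun c => proto f c false) with hN
  have main : ∀ a : Fin n → Bool, ∃ c₀ ∈ C, ∀ c' ∈ C,
      dist (toPoint a) (proto f c₀ (f a)) < dist (toPoint a) (proto f c' (!(f a))) := by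
    intro a
    set S := C.filter (fun c => Hd a c ≤ 1) with hSdef
    have hS : S.Nonempty := by
      obtain ⟨c, hc, hcd⟩ := hcov a
      exact ⟨c, by simp [hSdef, hc, hcd]⟩
    obtain ⟨c₀, hc₀S, hmin⟩ :=
      Finset.exists_min_image S (fun c => dist (toPoint a) (proto f c (f a))) hS
    have hc₀C : c₀ ∈ C := (Finset.mem_filter.mp hc₀S).1
    have hc₀d : Hd a c₀ ≤ 1 := (Finset.mem_filter.mp hc₀S).2
    refine ⟨c₀, hc₀C, fun c' hc' => ?_⟩
    by_cases hdd : Hd a c' ≤ 1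
    · exact lt_of_le_of_lt (hmin c' (Finset.mem_filter.mpr ⟨hc', hdd⟩)) (close_strict hn f hdd)
    · have h2 : 2 ≤ Hd a c' := by omega
      calc dist (toPoint a) (proto f c₀ (f a)) ≤ 11 / 10 := dist_near hn f hc₀d _
        _ < 13 / 10 := by norm_num
        _ ≤ dist (toPoint a) (proto f c' (!(f a))) := dist_far hn f h2 _
  refine ⟨P, N, ⟨?_, ?_⟩, ?_⟩
  · rw [Finset.disjoint_left]
    rintro x hxP hxN
    obtain ⟨c, hc, rfl⟩ := Finset.mem_image.mp hxP
    obtain ⟨c', hc', heq⟩ := Finset.mem_image.mp hxN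
    exact proto_true_ne_false hn f c c' heq.symm
  · intro a
    constructor
    · intro hfa
      obtain ⟨c₀, hc₀, hlt⟩ := main a
      refine ⟨proto f c₀ true, Finset.mem_image_of_mem _ hc₀, ?_⟩
      intro x hx
      obtain ⟨c', hc', rfl⟩ := Finset.mem_image.mp hx
      have h := hlt c' hc'
      rwa [hfa, Bool.not_true] at h
    · intro hfa
      obtain ⟨c₀, hc₀, hlt⟩ := main a
      refine ⟨proto f c₀ false, Finset.mem_image_of_mem _ hc₀, ?_⟩
      intro x hx
      obtain ⟨c', hc', rfl⟩ := Finset.mem_image.mp hx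
      have h := hlt c' hc'
      rwa [hfa, Bool.not_false] at h
  · have h1 : (P ∪ N).card ≤ 2 * C.card := by
      calc (P ∪ N).card ≤ P.card + N.card := Finset.card_union_le _ _
        _ ≤ C.card + C.card := add_le_add Finset.card_image_le Finset.card_image_le
        _ = 2 * C.card := by ring
    calc n * (P ∪ N).card ≤ n * (2 * C.card) := Nat.mul_le_mul_left _ h1
      _ ≤ 2 ^ (k + 1) * (2 * C.card) := Nat.mul_le_mul_right _ (le_of_lt hn2)
      _ = 4 * (2 ^ k * C.card) := by ring
      _ ≤ 4 * 2 ^ n := Nat.mul_le_mul_left _ hs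
      _ = 2 ^ (n + 2) := by ring

end NNShannon

/-- There is a function `ε(n) → 0` such that every Boolean function `f`
on `n ≥ 1` variables satisfies `NN(f) ≤ (1 + ε(n)) · 2^(n+2) / n`. -/
theorem NN_upper_shannon :
    ∃ ε : ℕ → ℝ, Filter.Tendsto ε Filter.atTop (nhds 0) ∧
      ∀ n : ℕ, 1 ≤ n → ∀ f : (Fin n → Bool) → Bool,
        (NN f : ℝ) ≤ (1 + ε n) * 2 ^ (n + 2) / n := by
  refine ⟨fun _ => 0, tendsto_const_nhds, fun n hn f => ?_⟩
  obtain ⟨P, N, hrep, hcard⟩ := NNShannon.exists_rep hn f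
  have hNN : NN f ≤ (P ∪ N).card := Nat.sInf_le ⟨P, N, hrep, rfl⟩
  have hN2 : n * NN f ≤ 2 ^ (n + 2) := le_trans (Nat.mul_le_mul_left _ hNN) hcard
  have hnpos : (0:ℝ) < n := by exact_mod_cast hn
  have hcast : (n : ℝ) * (NN f : ℝ) ≤ 2 ^ (n + 2) := by exact_mod_cast hN2
  rw [add_zero, one_mul, le_div_iff₀ hnpos]
  linarith
end
end

section
/- If a Boolean function f : {0,1}^n → {0,1} has a nearest neighbor representation with m prototypes, then f has a sign-representation over {1,2} having m terms. -/
open Finset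

noncomputable section

/-- `Σ_j c j * Π_i x̃_i ^ (e j i)` is a sign-representation of `f` over `{1, 2}`:
substituting `x̃ᵢ = 2 ^ xᵢ ∈ {1, 2}`, the polynomial is nonnegative exactly on the
true points of `f`. -/
def IsSignRep12 {n m : ℕ} (f : (Fin n → Bool) → Bool)
    (c : Fin m → ℝ) (e : Fin m → Fin n → ℕ) : Prop :=
  ∀ x : Fin n → Bool,
    (f x = true ↔ 0 ≤ ∑ j, c j * ∏ i, (if x i then (2 : ℝ) else 1) ^ (e j i))

private def Gf {n : ℕ} (p : Fin n → ℝ) (a : Fin n → Bool) : ℝ :=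
  2 * ∑ i, toPoint a i * p i - ∑ i, (p i)^2

private lemma expandSq {n : ℕ} (a b : Fin n → ℝ) :
    ∑ i, (a i - b i)^2 = ∑ i, (a i)^2 - (2*∑ i, a i * b i - ∑ i, (b i)^2) := by
  calc ∑ i, (a i - b i)^2 = ∑ i, ((a i)^2 - (2*(a i * b i) - (b i)^2)) :=
        Finset.sum_congr rfl fun i _ => by ring
    _ = _ := by rw [Finset.sum_sub_distrib, Finset.sum_sub_distrib, Finset.mul_sum]

private lemma dist_lt_iff_Gf {n : ℕ} (a : Fin n → Bool) (b c : EuclideanSpace ℝ (Fin n)) :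
    dist (toPoint a) b < dist (toPoint a) c ↔ Gf c a < Gf b a := by
  rw [EuclideanSpace.dist_eq, EuclideanSpace.dist_eq,
    Real.sqrt_lt_sqrt_iff (by positivity)]
  have h1 : ∀ (q : EuclideanSpace ℝ (Fin n)), ∑ i, dist (toPoint a i) (q i) ^ 2
      = ∑ i, (toPoint a i)^2 - Gf q a := by
    intro q
    rw [show (∑ i, dist (toPoint a i) (q i) ^ 2) = ∑ i, (toPoint a i - q i)^2 from
      Finset.sum_congr rfl fun i _ => by rw [Real.dist_eq, sq_abs], expandSq]
    rfl
  rw [h1, h1]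
  constructor <;> intro h <;> linarith

private def zf {n : ℕ} (D : ℕ) (p : Fin n → ℝ) (i : Fin n) : ℤ := ⌊p i * D⌋

private def rf {n : ℕ} (D : ℕ) (p : Fin n → ℝ) (i : Fin n) : ℝ := (zf D p i : ℝ) / D

private lemma rf_err {n : ℕ} {D : ℕ} (hD : (0:ℝ) < D) (p : Fin n → ℝ) (i : Fin n) :
    0 ≤ p i - rf D p i ∧ p i - rf D p i ≤ 1/D := by
  have h1 : (zf D p i : ℝ) ≤ p i * D := Int.floor_le _
  have h2 : p i * D < zf D p i + 1 := Int.lt_floor_add_one _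
  unfold rf
  constructor
  · rw [sub_nonneg, div_le_iff₀ hD]; exact h1
  · rw [sub_le_iff_le_add, ← add_div, le_div_iff₀ hD]; linarith

private def Bint {n : ℕ} (D : ℕ) (p : Fin n → ℝ) (a : Fin n → Bool) : ℤ :=
  2*D*(∑ i, if a i then zf D p i else 0) - ∑ i, (zf D p i)^2

private lemma Bint_cast {n : ℕ} {D : ℕ} (hD : (0:ℝ) < D) (p : Fin n → ℝ) (a : Fin n → Bool) :
    (Bint D p a : ℝ) = D^2 * Gf (rf D p) a := by
  have h1 : ∀ i, toPoint a i * rf D p i = (if a i then (zf D p i : ℝ) else 0) / D := by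
    intro i
    simp only [toPoint, boolToR, rf, WithLp.ofLp_toLp]
    split <;> simp
  have h2 : ∀ i, (rf D p i)^2 = (zf D p i : ℝ)^2 / D^2 := by
    intro i; rw [rf, div_pow]
  simp only [Gf, Bint]
  rw [Finset.sum_congr rfl fun i _ => h1 i, Finset.sum_congr rfl fun i _ => h2 i,
    ← Finset.sum_div, ← Finset.sum_div]
  push_cast [apply_ite (Int.cast : ℤ → ℝ)]
  field_simp

private lemma prod_zpow_two {ι : Type*} (s : Finset ι) (t : ι → ℤ) :
    ∏ i ∈ s, (2:ℝ) ^ (t i) = 2 ^ (∑ i ∈ s, t i) := by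
  induction s using Finset.cons_induction with
  | empty => simp
  | cons a s ha ih =>
      rw [Finset.prod_cons, Finset.sum_cons, ih, zpow_add₀ (by norm_num : (2:ℝ) ≠ 0)]

private lemma dom_sum {α : Type*} (A B : Finset α) (g : α → ℤ) (L : ℕ)
    (hL : (B.card : ℝ) < 2 ^ L) {b : α} (hb : b ∈ A)
    (hgap : ∀ c ∈ B, g c + 1 ≤ g b) :
    ∑ c ∈ B, (2:ℝ) ^ ((L:ℤ) * g c) < ∑ p ∈ A, (2:ℝ) ^ ((L:ℤ) * g p) := by
  have hbA : (2:ℝ) ^ ((L:ℤ) * g b) ≤ ∑ p ∈ A, (2:ℝ) ^ ((L:ℤ) * g p) :=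
    Finset.single_le_sum (f := fun p => (2:ℝ) ^ ((L:ℤ) * g p)) (fun p _ => by positivity) hb
  have h1 : ∑ c ∈ B, (2:ℝ) ^ ((L:ℤ) * g c) ≤ B.card * (2:ℝ) ^ ((L:ℤ) * g b - L) := by
    calc ∑ c ∈ B, (2:ℝ) ^ ((L:ℤ) * g c) ≤ ∑ _c ∈ B, (2:ℝ) ^ ((L:ℤ) * g b - L) :=
          Finset.sum_le_sum fun c hc => zpow_le_zpow_right₀ one_le_two (by
            have h := hgap c hc
            have hL0 : (0:ℤ) ≤ (L:ℤ) := Int.natCast_nonneg L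
            nlinarith)
      _ = B.card * (2:ℝ) ^ ((L:ℤ) * g b - L) := by rw [Finset.sum_const, nsmul_eq_mul]
  have h3 : (B.card : ℝ) * (2:ℝ) ^ ((L:ℤ) * g b - L) < (2:ℝ) ^ ((L:ℤ) * g b) := by
    rw [zpow_sub₀ (by norm_num : (2:ℝ) ≠ 0), zpow_natCast]
    have hpow : (0:ℝ) < 2 ^ ((L:ℤ) * g b) := by positivity
    have hY : (0:ℝ) < 2 ^ L := by positivity
    calc (B.card:ℝ) * ((2:ℝ) ^ ((L:ℤ) * g b) / 2 ^ L)
        = (2:ℝ) ^ ((L:ℤ) * g b) * ((B.card:ℝ) / 2 ^ L) := by ring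
      _ < (2:ℝ) ^ ((L:ℤ) * g b) * 1 := mul_lt_mul_of_pos_left ((div_lt_one hY).2 hL) hpow
      _ = (2:ℝ) ^ ((L:ℤ) * g b) := mul_one _
  linarith

private def Fterm {n : ℕ} (P : Finset (EuclideanSpace ℝ (Fin n))) (D mm M : ℕ)
    (x : Fin n → Bool) (p : EuclideanSpace ℝ (Fin n)) : ℝ :=
  (if p ∈ P then (1:ℝ) else -1) * (2:ℝ) ^ (-((mm:ℤ) * ∑ i, (zf D p i)^2)) *
    ∏ i, (if x i then (2:ℝ) else 1) ^ (((mm:ℤ)*(2*(D:ℤ)*zf D p i) + (mm:ℤ)*(M:ℤ)).toNat)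

set_option maxHeartbeats 2000000 in
/-- If a Boolean function `f` on `n` variables has a nearest neighbor
representation with `m` prototypes, then `f` has a sign-representation over `{1, 2}`
having `m` terms. -/
theorem nn_rep_to_signrep (n m : ℕ) (f : (Fin n → Bool) → Bool)
    (P N : Finset (EuclideanSpace ℝ (Fin n)))
    (hrep : IsNNRep f P N) (hm : (P ∪ N).card = m) :
    ∃ (c : Fin m → ℝ) (e : Fin m → Fin n → ℕ), IsSignRep12 f c e := by
  classical
  obtain ⟨hdisj, hsep⟩ := hrep
  -- Step 1: separation in terms of the affine functionals `Gf`.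
  have key : ∀ a : Fin n → Bool, ∃ b, b ∈ (if f a = true then P else N) ∧
      ∀ c ∈ (if f a = true then N else P), Gf c a < Gf b a := by
    intro a
    by_cases hfa : f a = true
    · obtain ⟨b, hbP, hb⟩ := (hsep a).1 hfa
      rw [if_pos hfa]
      refine ⟨b, hbP, ?_⟩
      rw [if_pos hfa]
      exact fun c hc => (dist_lt_iff_Gf a b c).1 (hb c hc)
    · have hfa' : f a = false := by simpa using hfa
      obtain ⟨b, hbN, hb⟩ := (hsep a).2 hfa'
      rw [if_neg hfa]
      refine ⟨b, hbN, ?_⟩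
      rw [if_neg hfa]
      exact fun c hc => (dist_lt_iff_Gf a b c).1 (hb c hc)
  choose Bw hBw1 hBw2 using key
  have hBwS : ∀ a, Bw a ∈ P ∪ N := by
    intro a
    have h := hBw1 a
    split at h
    · exact Finset.mem_union_left _ h
    · exact Finset.mem_union_right _ h
  have hSne : (P ∪ N).Nonempty := ⟨Bw (fun _ => false), hBwS _⟩
  have hune : (Finset.univ : Finset (Fin n → Bool)).Nonempty := Finset.univ_nonempty
  -- Step 2: a positive gap δ.
  obtain ⟨δ, hδpos, hδle⟩ : ∃ δ : ℝ, 0 < δ ∧ ∀ a : Fin n → Bool,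
      ∀ c ∈ (if f a = true then N else P), δ ≤ Gf (Bw a) a - Gf c a := by
    refine ⟨Finset.univ.inf' hune (fun a =>
      if h : ((if f a = true then N else P)).Nonempty
      then ((if f a = true then N else P)).inf' h (fun c => Gf (Bw a) a - Gf c a) else 1),
      ?_, ?_⟩
    · rw [Finset.lt_inf'_iff]
      intro a _
      by_cases hfa : f a = true
      · simp only [if_pos hfa]
        split
        · rw [Finset.lt_inf'_iff]
          intro cc hcc
          have h := hBw2 a cc (by rw [if_pos hfa]; exact hcc)
          linarith
        · norm_num
      · simp only [if_neg hfa]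
        split
        · rw [Finset.lt_inf'_iff]
          intro cc hcc
          have h := hBw2 a cc (by rw [if_neg hfa]; exact hcc)
          linarith
        · norm_num
    · intro a c hc
      refine le_trans (Finset.inf'_le _ (Finset.mem_univ a)) ?_
      rw [dif_pos ⟨c, hc⟩]
      exact Finset.inf'_le _ hc
  -- Step 3: a uniform bound on coordinates.
  obtain ⟨Csum, hCsum0, hCble⟩ : ∃ Csum : ℝ, 0 ≤ Csum ∧
      ∀ p ∈ P ∪ N, ∑ i, |p i| ≤ Csum := by
    refine ⟨(P ∪ N).sup' hSne (fun p => ∑ i, |p i|), ?_, ?_⟩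
    · obtain ⟨p₀, hp₀⟩ := hSne
      exact le_trans (Finset.sum_nonneg fun i _ => abs_nonneg _)
        (Finset.le_sup' (f := fun p => ∑ i, |p i|) hp₀)
    · intro p hp
      exact Finset.le_sup' (f := fun p => ∑ i, |p i|) hp
  -- Step 4: a denominator D fine enough.
  obtain ⟨D, hD0, hD1, hDkey⟩ : ∃ D : ℕ, (0:ℝ) < D ∧ (1:ℝ) ≤ D ∧
      (1/(D:ℝ)) * (3*n + 2*Csum) < δ/3 := by
    have hCpos : (0:ℝ) < 3*(3*n + 2*Csum + 1) := by positivity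
    have hεpos : 0 < δ / (3*(3*n + 2*Csum + 1)) := by positivity
    refine ⟨⌈1/(δ / (3*(3*n + 2*Csum + 1)))⌉₊ + 1, ?_, ?_, ?_⟩
    · exact_mod_cast Nat.succ_pos _
    · exact_mod_cast Nat.le_add_left 1 _
    · have h1 : 1/(δ / (3*(3*n + 2*Csum + 1))) < ((⌈1/(δ / (3*(3*n + 2*Csum + 1)))⌉₊ + 1 : ℕ) : ℝ) := by
        push_cast
        exact lt_of_le_of_lt (Nat.le_ceil _) (by linarith)
      have hDpos : (0:ℝ) < ((⌈1/(δ / (3*(3*n + 2*Csum + 1)))⌉₊ + 1 : ℕ) : ℝ) := by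
        exact_mod_cast Nat.succ_pos _
      have h2 : 1/((⌈1/(δ / (3*(3*n + 2*Csum + 1)))⌉₊ + 1 : ℕ) : ℝ)
          < δ / (3*(3*n + 2*Csum + 1)) := by
        calc 1/((⌈1/(δ / (3*(3*n + 2*Csum + 1)))⌉₊ + 1 : ℕ) : ℝ)
            < 1/(1/(δ / (3*(3*n + 2*Csum + 1)))) := one_div_lt_one_div_of_lt (by positivity) h1
          _ = δ / (3*(3*n + 2*Csum + 1)) := one_div_one_div _
      have h0 : (0:ℝ) ≤ 3*n + 2*Csum := by positivity
      calc (1/((⌈1/(δ / (3*(3*n + 2*Csum + 1)))⌉₊ + 1 : ℕ) : ℝ)) * (3*n + 2*Csum)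
          ≤ (δ / (3*(3*n + 2*Csum + 1))) * (3*n + 2*Csum) :=
            mul_le_mul_of_nonneg_right (le_of_lt h2) h0
        _ < δ/3 := by
            rw [div_mul_eq_mul_div, div_lt_div_iff₀ hCpos (by norm_num : (0:ℝ) < 3)]
            nlinarith
  -- Step 5: the rounded functionals are within δ/3 of the true ones.
  have herrG : ∀ p ∈ P ∪ N, ∀ a : Fin n → Bool,
      |Gf (rf D p) a - Gf p a| < δ/3 := by
    intro p hp a
    have hdiff : Gf (rf D p) a - Gf p a
        = ∑ i, ((rf D p i - p i) * (2 * toPoint a i - (rf D p i + p i))) := by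
      calc Gf (rf D p) a - Gf p a
          = ∑ i, (2 * (toPoint a i * rf D p i) - (rf D p i)^2
              - (2 * (toPoint a i * p i) - (p i)^2)) := by
            simp only [Gf, Finset.mul_sum]
            rw [← Finset.sum_sub_distrib, ← Finset.sum_sub_distrib, ← Finset.sum_sub_distrib]
        _ = _ := Finset.sum_congr rfl fun i _ => by ring
    have habs : |Gf (rf D p) a - Gf p a| ≤ ∑ i, (1/(D:ℝ)) * (3 + 2*|p i|) := by
      rw [hdiff]
      refine le_trans (Finset.abs_sum_le_sum_abs _ _) (Finset.sum_le_sum fun i _ => ?_)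
      rw [abs_mul]
      obtain ⟨he1, he2⟩ := rf_err hD0 p i
      have hXi : |toPoint a i| ≤ 1 := by
        simp only [toPoint, boolToR, WithLp.ofLp_toLp]
        split <;> norm_num
      have h4 : |rf D p i - p i| ≤ 1/D := by
        rw [abs_sub_comm, abs_of_nonneg he1]; exact he2
      have h1D : (1:ℝ)/D ≤ 1 := by rw [div_le_one hD0]; exact hD1
      have hri : |rf D p i| ≤ |p i| + 1 := by
        calc |rf D p i| = |p i - (p i - rf D p i)| := by ring_nf
          _ ≤ |p i| + |p i - rf D p i| := abs_sub _ _
          _ ≤ |p i| + 1 := by rw [abs_of_nonneg he1]; linarith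
      have h5 : |2 * toPoint a i - (rf D p i + p i)| ≤ 3 + 2*|p i| := by
        have ha1 : |2 * toPoint a i - (rf D p i + p i)|
            ≤ |2 * toPoint a i| + |rf D p i + p i| := abs_sub _ _
        have ha2 : |2 * toPoint a i| = 2 * |toPoint a i| := by
          rw [abs_mul, abs_two]
        have ha3 : |rf D p i + p i| ≤ |rf D p i| + |p i| := abs_add_le _ _
        linarith
      exact mul_le_mul h4 h5 (abs_nonneg _) (by positivity)
    have hsum2 : ∑ i, (1/(D:ℝ)) * (3 + 2*|p i|)
        = (1/(D:ℝ)) * (3*n + 2*∑ i, |p i|) := by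
      rw [← Finset.mul_sum]
      congr 1
      rw [Finset.sum_add_distrib, Finset.sum_const, ← Finset.mul_sum]
      simp [Finset.card_univ]
      ring
    have hle2 : (1/(D:ℝ)) * (3*n + 2*∑ i, |p i|) ≤ (1/(D:ℝ)) * (3*n + 2*Csum) := by
      have := hCble p hp
      apply mul_le_mul_of_nonneg_left (by linarith) (by positivity)
    calc |Gf (rf D p) a - Gf p a| ≤ ∑ i, (1/(D:ℝ)) * (3 + 2*|p i|) := habs
      _ = (1/(D:ℝ)) * (3*n + 2*∑ i, |p i|) := hsum2
      _ ≤ (1/(D:ℝ)) * (3*n + 2*Csum) := hle2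
      _ < δ/3 := hDkey
  -- Step 6: the integer gap.
  have hgapZ : ∀ a : Fin n → Bool, ∀ c ∈ (if f a = true then N else P),
      Bint D c a + 1 ≤ Bint D (Bw a) a := by
    intro a c hc
    have hcS : c ∈ P ∪ N := by
      split at hc
      · exact Finset.mem_union_right _ hc
      · exact Finset.mem_union_left _ hc
    have h1 := abs_lt.1 (herrG (Bw a) (hBwS a) a)
    have h2 := abs_lt.1 (herrG c hcS a)
    have h3 := hδle a c hc
    have hlt : Gf (rf D c) a < Gf (rf D (Bw a)) a := by
      obtain ⟨h1a, h1b⟩ := h1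
      obtain ⟨h2a, h2b⟩ := h2
      linarith
    have h4 : (Bint D c a : ℝ) < (Bint D (Bw a) a : ℝ) := by
      rw [Bint_cast hD0, Bint_cast hD0]
      have hD2 : (0:ℝ) < (D:ℝ)^2 := by positivity
      exact mul_lt_mul_of_pos_left hlt hD2
    have h5 : Bint D c a < Bint D (Bw a) a := by exact_mod_cast h4
    omega
  -- Step 7: cardinality bounds.
  have hNcard : (N.card : ℝ) < 2^m := by
    have h1 : N.card ≤ m := hm ▸ Finset.card_le_card Finset.subset_union_right
    have h2 : N.card < 2^m := lt_of_le_of_lt h1 (Nat.lt_two_pow_self (n := m))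
    exact_mod_cast h2
  have hPcard : (P.card : ℝ) < 2^m := by
    have h1 : P.card ≤ m := hm ▸ Finset.card_le_card Finset.subset_union_left
    have h2 : P.card < 2^m := lt_of_le_of_lt h1 (Nat.lt_two_pow_self (n := m))
    exact_mod_cast h2
  -- Step 8: shift making the exponents nonnegative.
  obtain ⟨M, hMb⟩ : ∃ M : ℕ, ∀ p ∈ P ∪ N, ∀ i : Fin n,
      0 ≤ (m:ℤ)*(2*(D:ℤ)*zf D p i) + (m:ℤ)*(M:ℤ) := by
    refine ⟨(P ∪ N).sup
      (fun p => Finset.univ.sup (fun i => (2*(D:ℤ)*zf D p i).natAbs)), ?_⟩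
    intro p hp i
    have h1 : (2*(D:ℤ)*zf D p i).natAbs
        ≤ (P ∪ N).sup (fun p => Finset.univ.sup (fun i => (2*(D:ℤ)*zf D p i).natAbs)) := by
      refine le_trans (Finset.le_sup (f := fun i => (2*(D:ℤ)*zf D p i).natAbs)
        (Finset.mem_univ i)) ?_
      exact Finset.le_sup (f := fun (p : EuclideanSpace ℝ (Fin n)) => Finset.univ.sup
        (fun i => (2*(D:ℤ)*zf D p i).natAbs)) hp
    have h2 : -(((P ∪ N).sup (fun p => Finset.univ.sup
        (fun i => (2*(D:ℤ)*zf D p i).natAbs)) : ℕ) : ℤ) ≤ 2*(D:ℤ)*zf D p i := by omega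
    have h3 : (0:ℤ) ≤ (m:ℤ) := Int.natCast_nonneg m
    nlinarith
  -- Step 9: the representation.
  set ψ : Fin m ≃ {y // y ∈ P ∪ N} := (finCongr hm.symm).trans (P ∪ N).equivFin.symm
    with hψdef
  refine ⟨fun j => (if ((ψ j : {y // y ∈ P ∪ N}) : EuclideanSpace ℝ (Fin n)) ∈ P
        then (1:ℝ) else -1) *
      (2:ℝ) ^ (-((m:ℤ) * ∑ i, (zf D ((ψ j : {y // y ∈ P ∪ N}) : EuclideanSpace ℝ (Fin n)) i)^2)),
    fun j i => ((m:ℤ)*(2*(D:ℤ)*zf D ((ψ j : {y // y ∈ P ∪ N}) : EuclideanSpace ℝ (Fin n)) i)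
      + (m:ℤ)*(M:ℤ)).toNat, ?_⟩
  intro x
  set T : ℤ := ∑ i, (if x i then (m:ℤ)*(M:ℤ) else 0) with hTdef
  have hterm : ∀ p ∈ P ∪ N, Fterm P D m M x p
      = (if p ∈ P then (1:ℝ) else -1) * (2:ℝ) ^ ((m:ℤ) * Bint D p x + T) := by
    intro p hp
    have hprod : ∏ i, (if x i then (2:ℝ) else 1)
          ^ (((m:ℤ)*(2*(D:ℤ)*zf D p i) + (m:ℤ)*(M:ℤ)).toNat)
        = (2:ℝ) ^ (∑ i, (if x i then ((m:ℤ)*(2*(D:ℤ)*zf D p i) + (m:ℤ)*(M:ℤ)) else 0)) := by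
      rw [← prod_zpow_two]
      refine Finset.prod_congr rfl fun i _ => ?_
      by_cases hxi : x i
      · rw [if_pos hxi, if_pos hxi, ← zpow_natCast, Int.toNat_of_nonneg (hMb p hp i)]
      · rw [if_neg hxi, if_neg hxi, one_pow, zpow_zero]
    have hexp : (∑ i, (if x i then ((m:ℤ)*(2*(D:ℤ)*zf D p i) + (m:ℤ)*(M:ℤ)) else 0))
        = (m:ℤ)*(2*(D:ℤ)*(∑ i, if x i then zf D p i else 0)) + T := by
      have hpt : ∀ i : Fin n,
          (if x i then ((m:ℤ)*(2*(D:ℤ)*zf D p i) + (m:ℤ)*(M:ℤ)) else 0)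
          = (m:ℤ)*(2*(D:ℤ)*(if x i then zf D p i else 0))
            + (if x i then (m:ℤ)*(M:ℤ) else 0) := by
        intro i; split <;> ring
      rw [Finset.sum_congr rfl fun i _ => hpt i, Finset.sum_add_distrib, hTdef]
      congr 1
      rw [← Finset.mul_sum]
      congr 1
      rw [← Finset.mul_sum]
    rw [Fterm, hprod, hexp, mul_assoc, ← zpow_add₀ (by norm_num : (2:ℝ) ≠ 0)]
    congr 2
    simp only [Bint]
    ring
  have heq : ∑ j : Fin m, Fterm P D m M x ((ψ j : {y // y ∈ P ∪ N}) : EuclideanSpace ℝ (Fin n))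
      = (2:ℝ)^T * ((∑ p ∈ P, (2:ℝ) ^ ((m:ℤ) * Bint D p x))
          - ∑ p ∈ N, (2:ℝ) ^ ((m:ℤ) * Bint D p x)) := by
    rw [Equiv.sum_comp ψ (fun pp => Fterm P D m M x
      ((pp : {y // y ∈ P ∪ N}) : EuclideanSpace ℝ (Fin n)))]
    rw [Finset.sum_coe_sort (P ∪ N) (Fterm P D m M x)]
    rw [Finset.sum_congr rfl hterm, Finset.sum_union hdisj]
    have hP' : ∑ p ∈ P, (if p ∈ P then (1:ℝ) else -1) * (2:ℝ) ^ ((m:ℤ) * Bint D p x + T)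
        = (2:ℝ)^T * ∑ p ∈ P, (2:ℝ) ^ ((m:ℤ) * Bint D p x) := by
      rw [Finset.mul_sum]
      refine Finset.sum_congr rfl fun p hp => ?_
      rw [if_pos hp, one_mul, zpow_add₀ (by norm_num : (2:ℝ) ≠ 0)]
      ring
    have hN' : ∑ p ∈ N, (if p ∈ P then (1:ℝ) else -1) * (2:ℝ) ^ ((m:ℤ) * Bint D p x + T)
        = -((2:ℝ)^T * ∑ p ∈ N, (2:ℝ) ^ ((m:ℤ) * Bint D p x)) := by
      rw [Finset.mul_sum, ← Finset.sum_neg_distrib]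
      refine Finset.sum_congr rfl fun p hp => ?_
      rw [if_neg (Finset.disjoint_right.1 hdisj hp), zpow_add₀ (by norm_num : (2:ℝ) ≠ 0)]
      ring
    rw [hP', hN']
    ring
  have hTpos : (0:ℝ) < (2:ℝ)^T := by positivity
  show f x = true ↔ 0 ≤ ∑ j : Fin m,
    Fterm P D m M x ((ψ j : {y // y ∈ P ∪ N}) : EuclideanSpace ℝ (Fin n))
  rw [heq]
  constructor
  · intro hfx
    have hb := hBw1 x
    have hgap := hgapZ x
    rw [if_pos hfx] at hb
    rw [if_pos hfx] at hgap
    have hdom := dom_sum P N (fun p => Bint D p x) m hNcard hb hgap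
    nlinarith [hdom, hTpos]
  · intro hge
    by_contra hfx
    have hb := hBw1 x
    have hgap := hgapZ x
    rw [if_neg hfx] at hb
    rw [if_neg hfx] at hgap
    have hdom := dom_sum N P (fun p => Bint D p x) m hPcard hb hgap
    nlinarith [hdom, hTpos, hge]
end
end
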